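/- arXiv:2411.09490 — 3 statements merged into one kernel-verified Lean document; each statement's English description precedes it below -/
import Mathlib

section
/- Let t, s, k, n be integers with t ≥ 0, s ≥ 0, k ≥ s+1 and n ≥ 2k+t. Let ℱ ⊆ C([n], k+t) and 𝒢 ⊆ C([n], k) be cross-intersecting families. If ℱ is (t+1)-intersecting and C([k+t+s], k+t) ⊆ ℱ, then |ℱ| + |𝒢| ≤ C(k+t+s, k+t) + C(n, k) − Σ_{i=0}^{s} C(k+t+s, i)·C(n−k−t−s, k−i). -/
open Finset

namespace FranklAux

/-- trace: number of elements in `[1, l]`. -/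
def tr (l : ℕ) (F : Finset ℕ) : ℕ := (F ∩ Icc 1 l).card

lemma tr_le_card (l : ℕ) (F : Finset ℕ) : tr l F ≤ F.card :=
  card_le_card inter_subset_left

lemma tr_erase_add_one {m l : ℕ} {F : Finset ℕ} (h1 : 1 ≤ m) (hml : m ≤ l) (hm : m ∈ F) :
    tr l (F.erase m) + 1 = tr l F := by
  unfold tr
  rw [erase_inter]
  exact card_erase_add_one (mem_inter.2 ⟨hm, mem_Icc.2 ⟨h1, hml⟩⟩)

lemma tr_erase_of_gt {m l : ℕ} {F : Finset ℕ} (hml : l < m) :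
    tr l (F.erase m) = tr l F := by
  unfold tr
  rw [erase_inter, erase_eq_of_notMem]
  intro h
  exact absurd (mem_Icc.1 (mem_inter.1 h).2).2 (by omega)

lemma tr_insert_of_le {m l : ℕ} {F : Finset ℕ} (h1 : 1 ≤ m) (hml : m ≤ l) (hm : m ∉ F) :
    tr l (insert m F) = tr l F + 1 := by
  unfold tr
  rw [insert_inter_of_mem (mem_Icc.2 ⟨h1, hml⟩)]
  exact card_insert_of_notMem fun h => hm (mem_inter.1 h).1

lemma tr_insert_of_gt {m l : ℕ} {F : Finset ℕ} (hml : l < m) :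
    tr l (insert m F) = tr l F := by
  unfold tr
  rw [insert_inter_of_notMem]
  intro h
  exact absurd (mem_Icc.1 h).2 (by omega)

/-- A family of finsets of `ℕ` is shifted (stable under all elementary compressions). -/
def Shifted (A : Finset (Finset ℕ)) : Prop :=
  ∀ ⦃i j F⦄, 1 ≤ i → i < j → F ∈ A → j ∈ F → i ∉ F → insert i (F.erase j) ∈ A

/-- Links of shifted `T`-intersecting families at the top element are `T`-intersecting. -/
lemma link_tint {T K m : ℕ} {D : Finset (Finset ℕ)}
    (hD : ∀ A ∈ D, A ⊆ Icc 1 m ∧ A.card = K + T)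
    (hsh : Shifted D)
    (hint : ∀ A ∈ D, ∀ B ∈ D, T ≤ (A ∩ B).card)
    (hm : 2 * K + T + 1 ≤ m) :
    ∀ A ∈ D, ∀ B ∈ D, m ∈ A → m ∈ B → T ≤ (A.erase m ∩ B.erase m).card := by
  intro A hA B hB hmA hmB
  by_contra hlt
  push_neg at hlt
  have hT : 1 ≤ T := by omega
  have hABe : A.erase m ∩ B.erase m = (A ∩ B).erase m := by
    rw [erase_inter, inter_erase, erase_idem]
  have hmAB : m ∈ A ∩ B := mem_inter.2 ⟨hmA, hmB⟩
  have h1 : T ≤ (A ∩ B).card := hint A hA B hB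
  have h2 : ((A ∩ B).erase m).card + 1 = (A ∩ B).card := card_erase_add_one hmAB
  rw [hABe] at hlt
  have hcardA : (A.erase m).card + 1 = A.card := card_erase_add_one hmA
  have hcardB : (B.erase m).card + 1 = B.card := card_erase_add_one hmB
  have hcU : (A.erase m ∪ B.erase m).card + ((A ∩ B).erase m).card
      = (A.erase m).card + (B.erase m).card := by
    rw [← hABe]; exact card_union_add_card_inter _ _
  have hex : ∃ x, x ∈ Icc 1 (m - 1) ∧ x ∉ A.erase m ∪ B.erase m := by
    by_contra hno
    push_neg at hno
    have hsubU : Icc 1 (m - 1) ⊆ A.erase m ∪ B.erase m := fun x hx => hno x hx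
    have := card_le_card hsubU
    rw [Nat.card_Icc] at this
    have hcA := (hD A hA).2
    have hcB := (hD B hB).2
    omega
  obtain ⟨x, hxI, hxU⟩ := hex
  rw [mem_Icc] at hxI
  have hxm : x < m := by omega
  have hxA : x ∉ A := by
    intro hxa
    exact hxU (mem_union_left _ (mem_erase.2 ⟨by omega, hxa⟩))
  have hxB : x ∉ B.erase m := fun h => hxU (mem_union_right _ h)
  have hW : insert x (A.erase m) ∈ D := hsh hxI.1 hxm hA hmA hxA
  have hfin := hint _ hW B hB
  have : insert x (A.erase m) ∩ B = (A ∩ B).erase m := by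
    ext y
    simp only [mem_inter, mem_insert, mem_erase]
    constructor
    · rintro ⟨hy1 | ⟨hy1, hy2⟩, hy3⟩
      · subst hy1
        exact absurd hy3 (fun h => hxB (mem_erase.2 ⟨by omega, h⟩))
      · exact ⟨hy1, hy2, hy3⟩
    · rintro ⟨hy1, hy2, hy3⟩
      exact ⟨Or.inr ⟨hy1, hy2⟩, hy3⟩
  rw [this] at hfin
  omega

/-- Core injection lemma: a shifted `T`-intersecting family of `(K+T)`-sets with large trace
has at least as many "non-degenerate" members as there are `K`-sets of trace at least `S`
disjoint from some member. -/
lemma IL (T l : ℕ) : ∀ m K S (D : Finset (Finset ℕ)),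
    (∀ A ∈ D, A ⊆ Icc 1 m ∧ A.card = K + T) →
    Shifted D →
    (∀ A ∈ D, ∀ B ∈ D, T ≤ (A ∩ B).card) →
    (1 ≤ S → ∀ A ∈ D, T + S ≤ tr l A) →
    2 * K + T ≤ m →
    (D.filter fun A => tr l A ≤ l - S).card ≤
      ((powersetCard K (Icc 1 m)).filter fun H => S ≤ tr l H ∧ ∃ B ∈ D, Disjoint B H).card := by
  intro m
  induction m using Nat.strong_induction_on with
  | _ m IH =>
  intro K S D hD hsh hint htr hm
  rcases Nat.eq_zero_or_pos K with hK0 | hK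
  · -- K = 0
    subst hK0
    rcases (D.filter fun A => tr l A ≤ l - S).eq_empty_or_nonempty with he | ⟨A0, hA0⟩
    · rw [he]; simp
    · have hA0' := mem_filter.1 hA0
      have hS : S = 0 := by
        by_contra hS
        have h1 := htr (by omega) A0 hA0'.1
        have h2 := tr_le_card l A0
        rw [(hD A0 hA0'.1).2] at h2
        have h3 := hA0'.2
        omega
      have hsub : (D.filter fun A => tr l A ≤ l - S) ⊆ {A0} := by
        intro A hA
        have hA' := mem_filter.1 hA
        have h1 := hint A hA'.1 A0 hA0'.1
        have hcA : A.card = T := by simpa using (hD A hA'.1).2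
        have hcA0 : A0.card = T := by simpa using (hD A0 hA0'.1).2
        have hAA0 : A ∩ A0 = A :=
          eq_of_subset_of_card_le inter_subset_left (by omega)
        have hAsub : A ⊆ A0 := hAA0 ▸ inter_subset_right
        have : A = A0 := eq_of_subset_of_card_le hAsub (by omega)
        simp [this]
      have htarget : (∅ : Finset ℕ) ∈
          (powersetCard 0 (Icc 1 m)).filter fun H => S ≤ tr l H ∧ ∃ B ∈ D, Disjoint B H := by
        rw [mem_filter, mem_powersetCard]
        exact ⟨⟨empty_subset _, card_empty⟩, by simp [hS], A0, hA0'.1, disjoint_empty_right _⟩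
      calc (D.filter fun A => tr l A ≤ l - S).card ≤ ({A0} : Finset (Finset ℕ)).card :=
            card_le_card hsub
        _ = 1 := card_singleton _
        _ ≤ _ := card_pos.2 ⟨∅, htarget⟩
  rcases lt_or_ge (2 * K + T) m with hrec | hbase
  swap
  · -- base case : m = 2K + T, complementation
    have hmeq : m = 2 * K + T := le_antisymm hbase hm
    apply card_le_card_of_injOn (fun A => Icc 1 m \ A)
    · intro A hA
      have hA' := mem_filter.1 hA
      obtain ⟨hAs, hAc⟩ := hD A hA'.1
      rw [mem_coe, mem_filter, mem_powersetCard]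
      have hcomp : (Icc 1 m \ A).card = K := by
        rw [card_sdiff_of_subset hAs, Nat.card_Icc, hAc]; omega
      refine ⟨⟨sdiff_subset, hcomp⟩, ?_, A, hA'.1, disjoint_sdiff⟩
      have h1 : (Icc 1 m \ A) ∩ Icc 1 l = (Icc 1 m ∩ Icc 1 l) \ (A ∩ Icc 1 l) := by
        ext x
        simp only [mem_sdiff, mem_inter]
        tauto
      have h2 : Icc 1 m ∩ Icc 1 l = Icc 1 (min m l) := by
        ext x; simp only [mem_inter, mem_Icc, le_min_iff]; omega
      have h3 : A ∩ Icc 1 l ⊆ Icc 1 (min m l) := by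
        rw [← h2]; exact inter_subset_inter hAs le_rfl
      have key : tr l (Icc 1 m \ A) = min m l - tr l A := by
        unfold tr
        rw [h1, h2, card_sdiff_of_subset h3, Nat.card_Icc]
        rfl
      rw [key]
      have h4 := hA'.2
      have h5 := tr_le_card l A
      rw [hAc] at h5
      have h6 : S = 0 ∨ T + S ≤ tr l A := by
        rcases Nat.eq_zero_or_pos S with h | h
        · exact Or.inl h
        · exact Or.inr (htr h A hA'.1)
      rcases le_total m l with hml | hlm
      · rw [min_eq_left hml]; omega
      · rw [min_eq_right hlm]; omega
    · intro A hA B hB hAB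
      rw [mem_coe] at hA hB
      have hAs := (hD A (mem_filter.1 hA).1).1
      have hBs := (hD B (mem_filter.1 hB).1).1
      dsimp only at hAB
      have : Icc 1 m \ (Icc 1 m \ A) = Icc 1 m \ (Icc 1 m \ B) := by rw [hAB]
      rwa [Finset.sdiff_sdiff_eq_self hAs, Finset.sdiff_sdiff_eq_self hBs] at this
  · -- recursive case : 2K + T < m
    have hm1 : 1 ≤ m := by omega
    set Dn := D.filter (fun A => m ∉ A) with hDn
    set Dm := D.filter (fun A => m ∈ A) with hDm
    set Lk := Dm.image (fun A => A.erase m) with hLk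
    set S' := if l < m then S else S - 1 with hS'
    -- members of Lk
    have hLkmem : ∀ B ∈ Lk, ∃ A ∈ D, m ∈ A ∧ A.erase m = B := by
      intro B hB
      obtain ⟨A, hA, rfl⟩ := mem_image.1 hB
      have hA' := mem_filter.1 hA
      exact ⟨A, hA'.1, hA'.2, rfl⟩
    -- hypotheses for Dn on [m-1]
    have hDn_sets : ∀ A ∈ Dn, A ⊆ Icc 1 (m - 1) ∧ A.card = K + T := by
      intro A hA
      have hA' := mem_filter.1 hA
      obtain ⟨hs, hc⟩ := hD A hA'.1
      refine ⟨fun x hx => ?_, hc⟩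
      have hx1 := mem_Icc.1 (hs hx)
      have : x ≠ m := fun h => hA'.2 (h ▸ hx)
      exact mem_Icc.2 ⟨hx1.1, by omega⟩
    have hDn_sh : Shifted Dn := by
      intro i j F h1 hij hF hjF hiF
      have hF' := mem_filter.1 hF
      have hnew := hsh h1 hij hF'.1 hjF hiF
      rw [hDn, mem_filter]
      refine ⟨hnew, ?_⟩
      have hjm : j ≤ m - 1 := (mem_Icc.1 ((hDn_sets F hF).1 hjF)).2
      simp only [mem_insert, mem_erase]
      rintro (h | ⟨-, h⟩)
      · omega
      · exact hF'.2 h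
    have hDn_int : ∀ A ∈ Dn, ∀ B ∈ Dn, T ≤ (A ∩ B).card := fun A hA B hB =>
      hint A (mem_filter.1 hA).1 B (mem_filter.1 hB).1
    have hDn_tr : 1 ≤ S → ∀ A ∈ Dn, T + S ≤ tr l A := fun hS A hA =>
      htr hS A (mem_filter.1 hA).1
    have hIH1 := IH (m - 1) (by omega) K S Dn hDn_sets hDn_sh hDn_int hDn_tr (by omega)
    -- hypotheses for Lk on [m-1]
    have hLk_sets : ∀ B ∈ Lk, B ⊆ Icc 1 (m - 1) ∧ B.card = (K - 1) + T := by
      intro B hB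
      obtain ⟨A, hA, hmA, rfl⟩ := hLkmem B hB
      obtain ⟨hs, hc⟩ := hD A hA
      constructor
      · intro x hx
        have hx' := mem_erase.1 hx
        have := mem_Icc.1 (hs hx'.2)
        exact mem_Icc.2 ⟨this.1, by omega⟩
      · have := card_erase_add_one hmA
        omega
    have hLk_sh : Shifted Lk := by
      intro i j B h1 hij hB hjB hiB
      obtain ⟨A, hA, hmA, rfl⟩ := hLkmem B hB
      have hjm : j ≤ m - 1 := (mem_Icc.1 ((hLk_sets _ hB).1 hjB)).2
      have hjA : j ∈ A := (mem_erase.1 hjB).2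
      have him : i ≠ m := by omega
      have hiA : i ∉ A := by
        intro h
        exact hiB (mem_erase.2 ⟨him, h⟩)
      have hnew : insert i (A.erase j) ∈ D := hsh h1 hij hA hjA hiA
      have hmnew : m ∈ insert i (A.erase j) :=
        mem_insert.2 (Or.inr (mem_erase.2 ⟨by omega, hmA⟩))
      have : insert i ((A.erase m).erase j) = (insert i (A.erase j)).erase m := by
        rw [erase_insert_of_ne him, Finset.erase_right_comm]
      rw [this]
      exact mem_image.2 ⟨_, mem_filter.2 ⟨hnew, hmnew⟩, rfl⟩
    have hLk_int : ∀ A ∈ Lk, ∀ B ∈ Lk, T ≤ (A ∩ B).card := by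
      intro B1 hB1 B2 hB2
      obtain ⟨A1, hA1, hmA1, rfl⟩ := hLkmem B1 hB1
      obtain ⟨A2, hA2, hmA2, rfl⟩ := hLkmem B2 hB2
      exact link_tint hD hsh hint (by omega) A1 hA1 A2 hA2 hmA1 hmA2
    have hLk_tr : 1 ≤ S' → ∀ B ∈ Lk, T + S' ≤ tr l B := by
      intro hS1 B hB
      obtain ⟨A, hA, hmA, rfl⟩ := hLkmem B hB
      rcases lt_or_ge l m with hlm | hml
      · have hSS : S' = S := by rw [hS', if_pos hlm]
        rw [tr_erase_of_gt hlm, hSS]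
        exact htr (by omega) A hA
      · have hSS : S' = S - 1 := by rw [hS', if_neg (by omega)]
        have h1 : 1 ≤ S := by omega
        have h2 := htr h1 A hA
        have h3 := tr_erase_add_one hm1 hml hmA
        omega
    have hIH2 := IH (m - 1) (by omega) (K - 1) S' Lk hLk_sets hLk_sh hLk_int hLk_tr (by omega)
    -- step 3: the Dm-part injects into the Lk-part
    have hF3 : (Dm.filter fun A => tr l A ≤ l - S).card ≤
        (Lk.filter fun B => tr l B ≤ l - S').card := by
      apply card_le_card_of_injOn (fun A => A.erase m)
      · intro A hA
        rw [mem_coe, mem_filter] at hA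
        have hmA : m ∈ A := (mem_filter.1 hA.1).2
        rw [mem_coe, mem_filter]
        refine ⟨mem_image.2 ⟨A, hA.1, rfl⟩, ?_⟩
        rcases lt_or_ge l m with hlm | hml
        · have hSS : S' = S := by rw [hS', if_pos hlm]
          rw [tr_erase_of_gt hlm, hSS]
          exact hA.2
        · have hSS : S' = S - 1 := by rw [hS', if_neg (by omega)]
          have h3 := tr_erase_add_one hm1 hml hmA
          have h4 := hA.2
          dsimp only
          omega
      · intro A hA B hB hAB
        rw [mem_coe, mem_filter] at hA hB
        have hmA : m ∈ A := (mem_filter.1 hA.1).2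
        have hmB : m ∈ B := (mem_filter.1 hB.1).2
        dsimp only at hAB
        rw [← insert_erase hmA, hAB, insert_erase hmB]
    -- partition of the left side
    have hsplit : (D.filter fun A => tr l A ≤ l - S).card =
        (Dn.filter fun A => tr l A ≤ l - S).card + (Dm.filter fun A => tr l A ≤ l - S).card := by
      have h1 := card_filter_add_card_filter_not
        (s := D.filter fun A => tr l A ≤ l - S) (p := fun A => m ∉ A)
      have e1 : (D.filter fun A => tr l A ≤ l - S).filter (fun A => m ∉ A)
          = Dn.filter fun A => tr l A ≤ l - S := by
        rw [hDn, filter_comm]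
      have e2 : (D.filter fun A => tr l A ≤ l - S).filter (fun A => ¬ m ∉ A)
          = Dm.filter fun A => tr l A ≤ l - S := by
        rw [hDm]
        ext A
        simp only [mem_filter]
        tauto
      rw [e1, e2] at h1
      omega
    -- target sets
    set tgt := (powersetCard K (Icc 1 m)).filter
      (fun H => S ≤ tr l H ∧ ∃ B ∈ D, Disjoint B H) with htgt
    set t1 := (powersetCard K (Icc 1 (m - 1))).filter
      (fun H => S ≤ tr l H ∧ ∃ B ∈ Dn, Disjoint B H) with ht1
    set t2 := (powersetCard (K - 1) (Icc 1 (m - 1))).filter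
      (fun H => S' ≤ tr l H ∧ ∃ B ∈ Lk, Disjoint B H) with ht2
    have hsub1 : t1 ⊆ tgt := by
      intro H hH
      rw [ht1, mem_filter, mem_powersetCard] at hH
      obtain ⟨⟨hHs, hHc⟩, hHtr, B, hB, hdisj⟩ := hH
      rw [htgt, mem_filter, mem_powersetCard]
      exact ⟨⟨hHs.trans (Icc_subset_Icc le_rfl (by omega)), hHc⟩, hHtr,
        B, (mem_filter.1 hB).1, hdisj⟩
    have hins : ∀ H ∈ t2, insert m H ∈ tgt := by
      intro H hH
      rw [ht2, mem_filter, mem_powersetCard] at hH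
      obtain ⟨⟨hHs, hHc⟩, hHtr, B, hB, hdisj⟩ := hH
      have hmH : m ∉ H := by
        intro h
        have := (mem_Icc.1 (hHs h)).2
        omega
      obtain ⟨A, hA, hmA, hAB⟩ := hLkmem B hB
      have hBc : B.card = (K - 1) + T := (hLk_sets B hB).2
      have hex : ∃ x, x ∈ Icc 1 (m - 1) ∧ x ∉ B ∪ H := by
        by_contra hno
        push_neg at hno
        have h5 := card_le_card (fun x hx => hno x hx : Icc 1 (m - 1) ⊆ B ∪ H)
        have h6 := card_union_le B H
        rw [Nat.card_Icc] at h5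
        omega
      obtain ⟨x, hxI, hxBH⟩ := hex
      rw [mem_Icc] at hxI
      have hxB : x ∉ B := fun h => hxBH (mem_union_left _ h)
      have hxH : x ∉ H := fun h => hxBH (mem_union_right _ h)
      have hxA : x ∉ A := by
        intro h
        apply hxB
        rw [← hAB]
        exact mem_erase.2 ⟨by omega, h⟩
      have hW : insert x (A.erase m) ∈ D := hsh hxI.1 (by omega) hA hmA hxA
      rw [hAB] at hW
      rw [htgt, mem_filter, mem_powersetCard]
      refine ⟨⟨?_, ?_⟩, ?_, insert x B, hW, ?_⟩
      · exact insert_subset (mem_Icc.2 ⟨by omega, le_rfl⟩)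
          (hHs.trans (Icc_subset_Icc le_rfl (by omega)))
      · rw [card_insert_of_notMem hmH, hHc]; omega
      · rcases lt_or_ge l m with hlm | hml
        · have hSS : S' = S := by rw [hS', if_pos hlm]
          rw [tr_insert_of_gt hlm]
          omega
        · have hSS : S' = S - 1 := by rw [hS', if_neg (by omega)]
          rw [tr_insert_of_le hm1 hml hmH]
          omega
      · rw [disjoint_insert_left, disjoint_insert_right]
        refine ⟨?_, ?_, hdisj⟩
        · simp only [mem_insert]
          push_neg
          exact ⟨by omega, hxH⟩
        · rw [← hAB]
          exact notMem_erase _ _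
    have hinj2 : (t2.image (insert m)).card = t2.card := by
      apply card_image_of_injOn
      intro a ha b hb hab
      rw [mem_coe, ht2, mem_filter, mem_powersetCard] at ha hb
      have hma : m ∉ a := by
        intro h
        have := (mem_Icc.1 (ha.1.1 h)).2
        omega
      have hmb : m ∉ b := by
        intro h
        have := (mem_Icc.1 (hb.1.1 h)).2
        omega
      rw [← erase_insert hma, hab, erase_insert hmb]
    have hdisj12 : Disjoint t1 (t2.image (insert m)) := by
      rw [disjoint_left]
      intro H hH1 hH2
      obtain ⟨H', hH', rfl⟩ := mem_image.1 hH2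
      have h7 := (mem_powersetCard.1 (mem_filter.1 hH1).1).1 (mem_insert_self m H')
      rw [mem_Icc] at h7
      omega
    have hunion : t1 ∪ t2.image (insert m) ⊆ tgt := by
      apply union_subset hsub1
      intro H hH
      obtain ⟨H', hH', rfl⟩ := mem_image.1 hH
      exact hins H' hH'
    have hc1 := card_union_of_disjoint hdisj12
    have hc2 := card_le_card hunion
    have hc3 := hF3.trans hIH2
    omega

/-! ### Compression machinery -/

/-- Elementary `(i,j)`-compression of a single set: replace `j` by `i` if possible. -/
def cps (i j : ℕ) (F : Finset ℕ) : Finset ℕ :=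
  if j ∈ F ∧ i ∉ F then insert i (F.erase j) else F

/-- Compression of a family. -/
def CF (i j : ℕ) (A : Finset (Finset ℕ)) : Finset (Finset ℕ) :=
  (A.filter fun F => cps i j F ∈ A) ∪ (A.filter fun F => cps i j F ∉ A).image (cps i j)

lemma cps_card (i j : ℕ) (F : Finset ℕ) : (cps i j F).card = F.card := by
  unfold cps
  split_ifs with h
  · rw [card_insert_of_notMem fun hx => h.2 (mem_erase.1 hx).2]
    have := card_erase_add_one h.1
    omega
  · rfl

lemma cps_ne_cond {i j : ℕ} {F : Finset ℕ} (h : cps i j F ≠ F) : j ∈ F ∧ i ∉ F := by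
  by_contra hc
  exact h (by unfold cps; rw [if_neg hc])

lemma cps_eq_of_cond {i j : ℕ} {F : Finset ℕ} (h : j ∈ F ∧ i ∉ F) :
    cps i j F = insert i (F.erase j) := by
  unfold cps; rw [if_pos h]

lemma cps_inj {i j : ℕ} {F G : Finset ℕ} (hF : j ∈ F ∧ i ∉ F) (hG : j ∈ G ∧ i ∉ G)
    (h : cps i j F = cps i j G) : F = G := by
  rw [cps_eq_of_cond hF, cps_eq_of_cond hG] at h
  have h2 : F.erase j = G.erase j := by
    have e1 : (insert i (F.erase j)).erase i = F.erase j :=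
      erase_insert fun hx => hF.2 (mem_erase.1 hx).2
    have e2 : (insert i (G.erase j)).erase i = G.erase j :=
      erase_insert fun hx => hG.2 (mem_erase.1 hx).2
    rw [← e1, h, e2]
  rw [← insert_erase hF.1, h2, insert_erase hG.1]

lemma cps_subset_Icc {i j n : ℕ} {F : Finset ℕ} (h1 : 1 ≤ i) (hij : i < j)
    (hF : F ⊆ Icc 1 n) : cps i j F ⊆ Icc 1 n := by
  unfold cps
  split_ifs with h
  · have hj : j ≤ n := (mem_Icc.1 (hF h.1)).2
    exact insert_subset (mem_Icc.2 ⟨h1, by omega⟩) ((erase_subset _ _).trans hF)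
  · exact hF

lemma tr_cps_le {i j l : ℕ} (h1 : 1 ≤ i) (hij : i < j) (F : Finset ℕ) :
    tr l F ≤ tr l (cps i j F) := by
  unfold cps
  split_ifs with h
  · rcases le_or_gt j l with hjl | hjl
    · have hj1 : 1 ≤ j := by omega
      have hil : i ≤ l := by omega
      have e1 : tr l (F.erase j) + 1 = tr l F := tr_erase_add_one hj1 hjl h.1
      have e2 : tr l (insert i (F.erase j)) = tr l (F.erase j) + 1 :=
        tr_insert_of_le h1 hil (fun hx => h.2 (mem_erase.1 hx).2)
      omega
    · have e1 : tr l (F.erase j) = tr l F := tr_erase_of_gt hjl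
      rcases le_or_gt i l with hil | hil
      · have e2 : tr l (insert i (F.erase j)) = tr l (F.erase j) + 1 :=
          tr_insert_of_le h1 hil (fun hx => h.2 (mem_erase.1 hx).2)
        omega
      · have e2 : tr l (insert i (F.erase j)) = tr l (F.erase j) :=
          tr_insert_of_gt hil
        omega
  · exact le_rfl

lemma mem_CF {i j : ℕ} {A : Finset (Finset ℕ)} {G : Finset ℕ} :
    G ∈ CF i j A ↔ (G ∈ A ∧ cps i j G ∈ A) ∨ (G ∉ A ∧ ∃ F ∈ A, cps i j F = G) := by
  unfold CF
  rw [mem_union, mem_filter, mem_image]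
  constructor
  · rintro (⟨h1, h2⟩ | ⟨F, hF, rfl⟩)
    · exact Or.inl ⟨h1, h2⟩
    · have hF' := mem_filter.1 hF
      exact Or.inr ⟨hF'.2, F, hF'.1, rfl⟩
  · rintro (⟨h1, h2⟩ | ⟨h1, F, hF, rfl⟩)
    · exact Or.inl ⟨h1, h2⟩
    · exact Or.inr ⟨F, mem_filter.2 ⟨hF, h1⟩, rfl⟩

lemma CF_parts_disjoint (i j : ℕ) (A : Finset (Finset ℕ)) :
    Disjoint (A.filter fun F => cps i j F ∈ A)
      ((A.filter fun F => cps i j F ∉ A).image (cps i j)) := by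
  rw [disjoint_left]
  intro G hG1 hG2
  obtain ⟨F, hF, rfl⟩ := mem_image.1 hG2
  exact (mem_filter.1 hF).2 (mem_filter.1 hG1).1

lemma CF_injOn (i j : ℕ) (A : Finset (Finset ℕ)) :
    Set.InjOn (cps i j) (A.filter fun F => cps i j F ∉ A) := by
  intro F hF G hG h
  rw [mem_coe, mem_filter] at hF hG
  have hFne : cps i j F ≠ F := fun he => hF.2 (by rw [he]; exact hF.1)
  have hGne : cps i j G ≠ G := fun he => hG.2 (by rw [he]; exact hG.1)
  exact cps_inj (cps_ne_cond hFne) (cps_ne_cond hGne) h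

lemma CF_card (i j : ℕ) (A : Finset (Finset ℕ)) : (CF i j A).card = A.card := by
  unfold CF
  rw [card_union_of_disjoint (CF_parts_disjoint i j A),
    card_image_of_injOn (CF_injOn i j A)]
  exact card_filter_add_card_filter_not (fun F => cps i j F ∈ A)

lemma cps_eq_self_of_not_cond {i j : ℕ} {F : Finset ℕ} (h : ¬(j ∈ F ∧ i ∉ F)) :
    cps i j F = F := by
  unfold cps; rw [if_neg h]

lemma cross_cps_right {r i j : ℕ} {FA FB : Finset (Finset ℕ)}
    (h : ∀ A ∈ FA, ∀ B ∈ FB, r ≤ (A ∩ B).card)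
    {A B : Finset ℕ} (hA : A ∈ FA) (hcA : cps i j A ∈ FA) (hB : B ∈ FB) :
    r ≤ (A ∩ cps i j B).card := by
  by_cases hc : j ∈ B ∧ i ∉ B
  · rw [cps_eq_of_cond hc]
    by_cases hiA : i ∈ A
    · have e : A ∩ insert i (B.erase j) = insert i ((A ∩ B).erase j) := by
        ext x
        simp only [mem_inter, mem_insert, mem_erase]
        constructor
        · rintro ⟨hx1, hx2 | ⟨hx2, hx3⟩⟩
          · exact Or.inl hx2
          · exact Or.inr ⟨hx2, hx1, hx3⟩
        · rintro (rfl | ⟨hx1, hx2, hx3⟩)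
          · exact ⟨hiA, Or.inl rfl⟩
          · exact ⟨hx2, Or.inr ⟨hx1, hx3⟩⟩
      rw [e, card_insert_of_notMem (fun hx => hc.2 (mem_inter.1 (mem_erase.1 hx).2).2)]
      have h1 := h A hA B hB
      have h2 := pred_card_le_card_erase (s := A ∩ B) (a := j)
      omega
    · have e : A ∩ insert i (B.erase j) = (A ∩ B).erase j := by
        ext x
        simp only [mem_inter, mem_insert, mem_erase]
        constructor
        · rintro ⟨hx1, hx2 | ⟨hx2, hx3⟩⟩
          · exact absurd (hx2 ▸ hx1) hiA
          · exact ⟨hx2, hx1, hx3⟩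
        · rintro ⟨hx1, hx2, hx3⟩
          exact ⟨hx2, Or.inr ⟨hx1, hx3⟩⟩
      rw [e]
      by_cases hjA : j ∈ A
      · have h2 := h _ hcA B hB
        have e2 : cps i j A ∩ B = (A ∩ B).erase j := by
          rw [cps_eq_of_cond ⟨hjA, hiA⟩]
          ext x
          simp only [mem_inter, mem_insert, mem_erase]
          constructor
          · rintro ⟨hx1 | ⟨hx1, hx2⟩, hx3⟩
            · exact absurd (hx1 ▸ hx3) hc.2
            · exact ⟨hx1, hx2, hx3⟩
          · rintro ⟨hx1, hx2, hx3⟩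
            exact ⟨Or.inr ⟨hx1, hx2⟩, hx3⟩
        rw [← e2]
        exact h2
      · rw [erase_eq_of_notMem (fun hx => hjA (mem_inter.1 hx).1)]
        exact h A hA B hB
  · rw [cps_eq_self_of_not_cond hc]
    exact h A hA B hB

lemma cross_CF {r i j : ℕ} {FA FB : Finset (Finset ℕ)}
    (h : ∀ A ∈ FA, ∀ B ∈ FB, r ≤ (A ∩ B).card) :
    ∀ A' ∈ CF i j FA, ∀ B' ∈ CF i j FB, r ≤ (A' ∩ B').card := by
  have hsymm : ∀ B ∈ FB, ∀ A ∈ FA, r ≤ (B ∩ A).card := by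
    intro B hB A hA; rw [inter_comm]; exact h A hA B hB
  intro A' hA' B' hB'
  rcases mem_CF.1 hA' with ⟨hA, hcA⟩ | ⟨hAn, A, hA, rfl⟩ <;>
    rcases mem_CF.1 hB' with ⟨hB, hcB⟩ | ⟨hBn, B, hB, rfl⟩
  · exact h A' hA B' hB
  · exact cross_cps_right h hA hcA hB
  · rw [inter_comm]
    exact cross_cps_right hsymm hB hcB hA
  · have hAne : cps i j A ≠ A := fun he => hAn (by rw [he]; exact hA)
    have hBne : cps i j B ≠ B := fun he => hBn (by rw [he]; exact hB)
    have hcondA := cps_ne_cond hAne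
    have hcondB := cps_ne_cond hBne
    rw [cps_eq_of_cond hcondA, cps_eq_of_cond hcondB]
    have e : insert i (A.erase j) ∩ insert i (B.erase j) = insert i ((A ∩ B).erase j) := by
      ext x
      simp only [mem_inter, mem_insert, mem_erase]
      tauto
    rw [e, card_insert_of_notMem (fun hx => hcondA.2 (mem_inter.1 (mem_erase.1 hx).2).1)]
    have h1 := h A hA B hB
    have h2 := pred_card_le_card_erase (s := A ∩ B) (a := j)
    omega

/-! ### Weight -/

def wt (A : Finset (Finset ℕ)) : ℕ := ∑ F ∈ A, ∑ x ∈ F, x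

lemma wt_CF_lt {i j : ℕ} {A : Finset (Finset ℕ)} (hij : i < j) {F0 : Finset ℕ}
    (hF0 : F0 ∈ A) (hmv : cps i j F0 ∉ A) : wt (CF i j A) < wt A := by
  unfold wt CF
  rw [sum_union (CF_parts_disjoint i j A),
    sum_image (fun x hx y hy => CF_injOn i j A (mem_coe.2 hx) (mem_coe.2 hy))]
  have key : ∀ F ∈ A.filter (fun F => cps i j F ∉ A), ∑ x ∈ cps i j F, x < ∑ x ∈ F, x := by
    intro F hF
    have hF' := mem_filter.1 hF
    have hne : cps i j F ≠ F := fun he => hF'.2 (by rw [he]; exact hF'.1)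
    have hcond := cps_ne_cond hne
    rw [cps_eq_of_cond hcond, sum_insert (fun hx => hcond.2 (mem_erase.1 hx).2)]
    have e1 : ∑ x ∈ F.erase j, x + j = ∑ x ∈ F, x :=
      Finset.sum_erase_add F _ hcond.1
    omega
  have hlt := sum_lt_sum_of_nonempty ⟨F0, mem_filter.2 ⟨hF0, hmv⟩⟩ key
  have e2 := sum_filter_add_sum_filter_not A (fun F => cps i j F ∈ A) (fun F => ∑ x ∈ F, x)
  omega

/-! ### Trace lower bounds -/

lemma F_trace {t s k : ℕ} {A : Finset ℕ}
    (h : ∀ B : Finset ℕ, B ⊆ Icc 1 (k + t + s) → B.card = k + t → t + 1 ≤ (A ∩ B).card) :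
    t + s + 1 ≤ tr (k + t + s) A := by
  set l := k + t + s with hl
  by_contra hlt
  push_neg at hlt
  set P := A ∩ Icc 1 l with hP
  have hPIcc : P ⊆ Icc 1 l := inter_subset_right
  have hPc : P.card = tr l A := rfl
  obtain ⟨R, hRP, hRc⟩ := exists_subset_card_eq (n := P.card - t) (s := P) (by omega)
  have hRIcc : R ⊆ Icc 1 l := hRP.trans hPIcc
  have hcard : k + t ≤ (Icc 1 l \ R).card := by
    rw [card_sdiff_of_subset hRIcc, Nat.card_Icc, hRc]
    omega
  obtain ⟨B, hBsub, hBc⟩ := exists_subset_card_eq hcard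
  have h1 := h B (hBsub.trans sdiff_subset) hBc
  have h2 : A ∩ B ⊆ P \ R := by
    intro x hx
    have hx' := mem_inter.1 hx
    have hxB := hBsub hx'.2
    rw [mem_sdiff] at hxB
    exact mem_sdiff.2 ⟨mem_inter.2 ⟨hx'.1, hxB.1⟩, hxB.2⟩
  have h3 := card_le_card h2
  have h4 : (P \ R).card = P.card - R.card := card_sdiff_of_subset hRP
  omega

lemma G_trace {t s k : ℕ} {B : Finset ℕ} (hk : s + 1 ≤ k)
    (h : ∀ A : Finset ℕ, A ⊆ Icc 1 (k + t + s) → A.card = k + t → (A ∩ B).Nonempty) :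
    s + 1 ≤ tr (k + t + s) B := by
  set l := k + t + s with hl
  by_contra hlt
  push_neg at hlt
  set P := B ∩ Icc 1 l with hP
  have hPc : P.card = tr l B := rfl
  have hPIcc : P ⊆ Icc 1 l := inter_subset_right
  obtain ⟨Q, hPQ, hQIcc, hQc⟩ := exists_subsuperset_card_eq (n := s) hPIcc (by omega)
      (by rw [Nat.card_Icc]; omega)
  have hAc : (Icc 1 l \ Q).card = k + t := by
    rw [card_sdiff_of_subset hQIcc, Nat.card_Icc, hQc]; omega
  obtain ⟨x, hx⟩ := h _ sdiff_subset hAc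
  rw [mem_inter, mem_sdiff] at hx
  exact hx.1.2 (hPQ (mem_inter.2 ⟨hx.2, hx.1.1⟩))

/-! ### The key counting claim -/

lemma low_split {t s k n : ℕ} (hk : s + 1 ≤ k) {F : Finset (Finset ℕ)}
    (hF : F ⊆ powersetCard (k + t) (Icc 1 n))
    (hsub : powersetCard (k + t) (Icc 1 (k + t + s)) ⊆ F) :
    (F.filter fun A => tr (k + t + s) A ≤ (k + t + s) - (s + 1)).card
      + (powersetCard (k + t) (Icc 1 (k + t + s))).card = F.card := by
  set l := k + t + s with hl
  have key : F.filter (fun A => ¬(tr l A ≤ l - (s + 1))) = powersetCard (k + t) (Icc 1 l) := by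
    ext B
    rw [mem_filter, mem_powersetCard]
    constructor
    · rintro ⟨hBF, hBtr⟩
      obtain ⟨hBs, hBc⟩ := mem_powersetCard.1 (hF hBF)
      push_neg at hBtr
      have h1 := tr_le_card l B
      have h2 : tr l B = k + t := by omega
      have h3 : B ∩ Icc 1 l = B := by
        apply eq_of_subset_of_card_le inter_subset_left
        have : (B ∩ Icc 1 l).card = tr l B := rfl
        omega
      refine ⟨fun x hx => ?_, hBc⟩
      rw [← h3] at hx
      exact (mem_inter.1 hx).2
    · rintro ⟨hBs, hBc⟩
      refine ⟨hsub (mem_powersetCard.2 ⟨hBs, hBc⟩), ?_⟩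
      have h3 : B ∩ Icc 1 l = B := inter_eq_left.2 hBs
      have h4 : tr l B = k + t := by
        unfold tr
        rw [h3, hBc]
      omega
  have h0 := card_filter_add_card_filter_not (s := F)
    (p := fun A => tr l A ≤ l - (s + 1))
  rw [key] at h0
  exact h0

lemma claimC_stable {t s k n : ℕ} (hk : s + 1 ≤ k) (hn : 2 * k + t ≤ n)
    {F : Finset (Finset ℕ)}
    (hF : F ⊆ powersetCard (k + t) (Icc 1 n))
    (hint : ∀ A ∈ F, ∀ B ∈ F, t + 1 ≤ (A ∩ B).card)
    (hsub : powersetCard (k + t) (Icc 1 (k + t + s)) ⊆ F)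
    (hsh : Shifted F) :
    (F.filter fun A => tr (k + t + s) A ≤ (k + t + s) - (s + 1)).card ≤
      ((powersetCard k (Icc 1 n)).filter fun H =>
        s + 1 ≤ tr (k + t + s) H ∧ ∃ B ∈ F, Disjoint B H).card := by
  refine IL t (k + t + s) n k (s + 1) F ?_ hsh ?_ ?_ hn
  · intro A hA
    exact mem_powersetCard.1 (hF hA)
  · intro A hA B hB
    exact le_trans (by omega) (hint A hA B hB)
  · intro _ A hA
    have h2 : t + s + 1 ≤ tr (k + t + s) A := by
      apply F_trace
      intro B hBs hBc
      exact hint A hA B (hsub (mem_powersetCard.2 ⟨hBs, hBc⟩))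
    omega

lemma CF_subset_powersetCard {i j n r : ℕ} (h1 : 1 ≤ i) (hij : i < j)
    {F : Finset (Finset ℕ)} (hF : F ⊆ powersetCard r (Icc 1 n)) :
    CF i j F ⊆ powersetCard r (Icc 1 n) := by
  intro G hG
  rcases mem_CF.1 hG with ⟨hGF, -⟩ | ⟨-, A, hA, rfl⟩
  · exact hF hGF
  · obtain ⟨hs, hc⟩ := mem_powersetCard.1 (hF hA)
    exact mem_powersetCard.2 ⟨cps_subset_Icc h1 hij hs, (cps_card i j A).trans hc⟩

lemma CF_sub0 {i j k t s : ℕ} (h1 : 1 ≤ i) (hij : i < j) {F : Finset (Finset ℕ)}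
    (hsub : powersetCard (k + t) (Icc 1 (k + t + s)) ⊆ F) :
    powersetCard (k + t) (Icc 1 (k + t + s)) ⊆ CF i j F := by
  intro B hB
  obtain ⟨hBs, hBc⟩ := mem_powersetCard.1 hB
  have hcpsB : cps i j B ∈ F := by
    apply hsub
    exact mem_powersetCard.2 ⟨cps_subset_Icc h1 hij hBs, (cps_card i j B).trans hBc⟩
  exact mem_CF.2 (Or.inl ⟨hsub hB, hcpsB⟩)

lemma Y_mono {i j k n l s : ℕ} (h1 : 1 ≤ i) (hij : i < j) (F : Finset (Finset ℕ)) :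
    ((powersetCard k (Icc 1 n)).filter fun H =>
        s + 1 ≤ tr l H ∧ ∀ B ∈ F, ¬ Disjoint B H).card ≤
    ((powersetCard k (Icc 1 n)).filter fun H =>
        s + 1 ≤ tr l H ∧ ∀ B ∈ CF i j F, ¬ Disjoint B H).card := by
  set Y := (powersetCard k (Icc 1 n)).filter
    (fun H => s + 1 ≤ tr l H ∧ ∀ B ∈ F, ¬ Disjoint B H) with hY
  have hcross : ∀ B ∈ F, ∀ H ∈ Y, 1 ≤ (B ∩ H).card := by
    intro B hB H hH
    have hH' := (mem_filter.1 hH).2.2 B hB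
    rw [not_disjoint_iff_nonempty_inter] at hH'
    exact card_pos.2 hH'
  have hCFY := cross_CF (r := 1) (i := i) (j := j) hcross
  rw [← CF_card i j Y]
  apply card_le_card
  intro H hHc
  rw [mem_filter]
  have hmeets : ∀ B ∈ CF i j F, ¬ Disjoint B H := by
    intro B hB
    rw [not_disjoint_iff_nonempty_inter]
    exact card_pos.1 (hCFY B hB H hHc)
  rcases mem_CF.1 hHc with ⟨hHY, -⟩ | ⟨-, H0, hH0, rfl⟩
  · have hH' := mem_filter.1 hHY
    exact ⟨hH'.1, hH'.2.1, hmeets⟩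
  · have hH' := mem_filter.1 hH0
    obtain ⟨hs0, hc0⟩ := mem_powersetCard.1 hH'.1
    exact ⟨mem_powersetCard.2 ⟨cps_subset_Icc h1 hij hs0, (cps_card i j H0).trans hc0⟩,
      le_trans hH'.2.1 (tr_cps_le h1 hij H0), hmeets⟩

lemma Bstar_card {k n l s : ℕ} (F : Finset (Finset ℕ)) :
    ((powersetCard k (Icc 1 n)).filter fun H => s + 1 ≤ tr l H ∧ ∃ B ∈ F, Disjoint B H).card
    + ((powersetCard k (Icc 1 n)).filter fun H => s + 1 ≤ tr l H ∧ ∀ B ∈ F, ¬ Disjoint B H).card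
    = ((powersetCard k (Icc 1 n)).filter fun H => s + 1 ≤ tr l H).card := by
  have e1 : (powersetCard k (Icc 1 n)).filter
      (fun H => s + 1 ≤ tr l H ∧ ∃ B ∈ F, Disjoint B H)
      = ((powersetCard k (Icc 1 n)).filter fun H => s + 1 ≤ tr l H).filter
        (fun H => ∃ B ∈ F, Disjoint B H) := by
    rw [filter_filter]
  have e2 : (powersetCard k (Icc 1 n)).filter
      (fun H => s + 1 ≤ tr l H ∧ ∀ B ∈ F, ¬ Disjoint B H)
      = ((powersetCard k (Icc 1 n)).filter fun H => s + 1 ≤ tr l H).filter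
        (fun H => ¬ ∃ B ∈ F, Disjoint B H) := by
    rw [filter_filter]
    apply filter_congr
    intro H _
    constructor
    · rintro ⟨h1, h2⟩
      exact ⟨h1, by push_neg; exact h2⟩
    · rintro ⟨h1, h2⟩
      exact ⟨h1, by push_neg at h2; exact h2⟩
  rw [e1, e2]
  exact card_filter_add_card_filter_not
    (p := fun H => ∃ B ∈ F, Disjoint B H)

lemma claimC {t s k n : ℕ} (hk : s + 1 ≤ k) (hn : 2 * k + t ≤ n) :
    ∀ (W : ℕ) (F : Finset (Finset ℕ)), wt F ≤ W →
    F ⊆ powersetCard (k + t) (Icc 1 n) →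
    (∀ A ∈ F, ∀ B ∈ F, t + 1 ≤ (A ∩ B).card) →
    powersetCard (k + t) (Icc 1 (k + t + s)) ⊆ F →
    (F.filter fun A => tr (k + t + s) A ≤ (k + t + s) - (s + 1)).card ≤
      ((powersetCard k (Icc 1 n)).filter fun H =>
        s + 1 ≤ tr (k + t + s) H ∧ ∃ B ∈ F, Disjoint B H).card := by
  intro W
  induction W with
  | zero =>
    intro F hW hF hint hsub
    refine claimC_stable hk hn hF hint hsub ?_
    intro i j A h1 hij hA hjA hiA
    exfalso
    have hAp : j ≤ ∑ x ∈ A, x :=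
      single_le_sum (f := fun x => x) (fun _ _ => Nat.zero_le _) hjA
    have hle : ∑ x ∈ A, x ≤ wt F := by
      unfold wt
      exact single_le_sum (f := fun G => ∑ x ∈ G, x) (fun _ _ => Nat.zero_le _) hA
    omega
  | succ W IH =>
    intro F hW hF hint hsub
    by_cases hsh : Shifted F
    · exact claimC_stable hk hn hF hint hsub hsh
    · unfold Shifted at hsh
      push_neg at hsh
      obtain ⟨i, j, A, h1, hij, hA, hjA, hiA, hmv⟩ := hsh
      have hmv' : cps i j A ∉ F := by
        rw [cps_eq_of_cond ⟨hjA, hiA⟩]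
        exact hmv
      have hwt : wt (CF i j F) ≤ W := by
        have := wt_CF_lt hij hA hmv'
        omega
      have hF'sub := CF_subset_powersetCard h1 hij hF
      have hint' := cross_CF (r := t + 1) (i := i) (j := j) hint
      have hsub' := CF_sub0 (t := t) (s := s) h1 hij hsub
      have hIH := IH (CF i j F) hwt hF'sub hint' hsub'
      have e1 := low_split hk hF hsub
      have e2 := low_split hk hF'sub hsub'
      have e3 : (CF i j F).card = F.card := CF_card i j F
      have e4 := Bstar_card (k := k) (n := n) (l := k + t + s) (s := s) F
      have e5 := Bstar_card (k := k) (n := n) (l := k + t + s) (s := s) (CF i j F)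
      have e6 := Y_mono (k := k) (n := n) (l := k + t + s) (s := s) h1 hij F
      omega

/-! ### Counting -/

lemma slice_card {n k l i : ℕ} (hln : l ≤ n) (hik : i ≤ k) :
    ((powersetCard k (Icc 1 n)).filter fun H => tr l H = i).card
      = l.choose i * (n - l).choose (k - i) := by
  have hsplit : Icc 1 n = Icc 1 l ∪ Ioc l n := by
    ext x
    simp only [mem_union, mem_Icc, mem_Ioc]
    omega
  have hcard : ((powersetCard i (Icc 1 l)) ×ˢ (powersetCard (k - i) (Ioc l n))).card
      = l.choose i * (n - l).choose (k - i) := by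
    rw [card_product, card_powersetCard, card_powersetCard, Nat.card_Icc, Nat.card_Ioc]
    simp [Nat.succ_sub_one]
  rw [← hcard]
  apply card_nbij' (fun H => (H ∩ Icc 1 l, H ∩ Ioc l n)) (fun p => p.1 ∪ p.2)
  · intro H hH
    rw [mem_coe, mem_filter] at hH
    obtain ⟨hHp, hHtr⟩ := hH
    obtain ⟨hHs, hHc⟩ := mem_powersetCard.1 hHp
    rw [mem_coe, mem_product]
    dsimp only
    have hPc : (H ∩ Icc 1 l).card = tr l H := rfl
    refine ⟨mem_powersetCard.2 ⟨inter_subset_right, by omega⟩,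
      mem_powersetCard.2 ⟨inter_subset_right, ?_⟩⟩
    have hdisj : Disjoint (H ∩ Icc 1 l) (H ∩ Ioc l n) := by
      rw [disjoint_left]
      intro a ha hb
      have h1 := mem_Icc.1 (mem_inter.1 ha).2
      have h2 := mem_Ioc.1 (mem_inter.1 hb).2
      omega
    have hun : (H ∩ Icc 1 l) ∪ (H ∩ Ioc l n) = H := by
      rw [← inter_union_distrib_left, ← hsplit]
      exact inter_eq_left.2 hHs
    have hcu := card_union_of_disjoint hdisj
    rw [hun] at hcu
    omega
  · intro p hp
    rw [mem_coe, mem_product] at hp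
    obtain ⟨hp1, hp2⟩ := hp
    obtain ⟨hPs, hPc⟩ := mem_powersetCard.1 hp1
    obtain ⟨hQs, hQc⟩ := mem_powersetCard.1 hp2
    have hdisj : Disjoint p.1 p.2 := by
      rw [disjoint_left]
      intro a ha hb
      have h1 := mem_Icc.1 (hPs ha)
      have h2 := mem_Ioc.1 (hQs hb)
      omega
    rw [mem_coe, mem_filter, mem_powersetCard]
    refine ⟨⟨?_, ?_⟩, ?_⟩
    · rw [hsplit]
      exact union_subset_union hPs hQs
    · rw [card_union_of_disjoint hdisj]
      omega
    · show ((p.1 ∪ p.2) ∩ Icc 1 l).card = i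
      have e : (p.1 ∪ p.2) ∩ Icc 1 l = p.1 := by
        ext x
        simp only [mem_inter, mem_union, mem_Icc]
        constructor
        · rintro ⟨hx1 | hx1, hx2⟩
          · exact hx1
          · have := mem_Ioc.1 (hQs hx1)
            omega
        · intro hx
          have := mem_Icc.1 (hPs hx)
          exact ⟨Or.inl hx, this⟩
      rw [e, hPc]
  · intro H hH
    rw [mem_coe, mem_filter] at hH
    obtain ⟨hHp, hHtr⟩ := hH
    obtain ⟨hHs, hHc⟩ := mem_powersetCard.1 hHp
    show (H ∩ Icc 1 l) ∪ (H ∩ Ioc l n) = H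
    rw [← inter_union_distrib_left, ← hsplit]
    exact inter_eq_left.2 hHs
  · intro p hp
    rw [mem_coe, mem_product] at hp
    obtain ⟨hp1, hp2⟩ := hp
    obtain ⟨hPs, hPc⟩ := mem_powersetCard.1 hp1
    obtain ⟨hQs, hQc⟩ := mem_powersetCard.1 hp2
    have e1 : (p.1 ∪ p.2) ∩ Icc 1 l = p.1 := by
      ext x
      simp only [mem_inter, mem_union, mem_Icc]
      constructor
      · rintro ⟨hx1 | hx1, hx2⟩
        · exact hx1
        · have := mem_Ioc.1 (hQs hx1)
          omega
      · intro hx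
        have := mem_Icc.1 (hPs hx)
        exact ⟨Or.inl hx, this⟩
    have e2 : (p.1 ∪ p.2) ∩ Ioc l n = p.2 := by
      ext x
      simp only [mem_inter, mem_union, mem_Ioc]
      constructor
      · rintro ⟨hx1 | hx1, hx2⟩
        · have := mem_Icc.1 (hPs hx1)
          omega
        · exact hx1
      · intro hx
        have := mem_Ioc.1 (hQs hx)
        exact ⟨Or.inr hx, this⟩
    show ((p.1 ∪ p.2) ∩ Icc 1 l, (p.1 ∪ p.2) ∩ Ioc l n) = p
    rw [e1, e2]

lemma lowZ_card {n k l s : ℕ} (hln : l ≤ n) (hsk : s + 1 ≤ k) :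
    ((powersetCard k (Icc 1 n)).filter fun H => tr l H ≤ s).card
      = ∑ i ∈ range (s + 1), l.choose i * (n - l).choose (k - i) := by
  have e : (powersetCard k (Icc 1 n)).filter (fun H => tr l H ≤ s)
      = (range (s + 1)).biUnion
          (fun i => (powersetCard k (Icc 1 n)).filter fun H => tr l H = i) := by
    ext H
    simp only [mem_filter, mem_biUnion, mem_range]
    constructor
    · rintro ⟨h1, h2⟩
      exact ⟨tr l H, by omega, h1, rfl⟩
    · rintro ⟨i, hi, h1, h2⟩
      exact ⟨h1, by omega⟩
  rw [e, card_biUnion]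
  · apply sum_congr rfl
    intro i hi
    exact slice_card hln (by rw [mem_range] at hi; omega)
  · intro x hx y hy hxy
    rw [Function.onFun, disjoint_left]
    intro H h1 h2
    exact hxy (by rw [← (mem_filter.1 h1).2, (mem_filter.1 h2).2])

end FranklAux

open FranklAux in
theorem frankl_conjecture
    (t s k n : ℕ) (hk : s + 1 ≤ k) (hn : 2 * k + t ≤ n)
    (F G : Finset (Finset ℕ))
    (hF : F ⊆ powersetCard (k + t) (Icc 1 n))
    (hG : G ⊆ powersetCard k (Icc 1 n))
    (hcross : ∀ A ∈ F, ∀ B ∈ G, (A ∩ B).Nonempty)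
    (hint : ∀ A ∈ F, ∀ A' ∈ F, t + 1 ≤ (A ∩ A').card)
    (hsub : powersetCard (k + t) (Icc 1 (k + t + s)) ⊆ F) :
    F.card + G.card ≤
      Nat.choose (k + t + s) (k + t) + Nat.choose n k
        - ∑ i ∈ Finset.range (s + 1),
            Nat.choose (k + t + s) i * Nat.choose (n - k - t - s) (k - i) := by
  have hln : k + t + s ≤ n := by omega
  have hGsub : ∀ B ∈ G, B ∈ (powersetCard k (Icc 1 n)).filter
      (fun H => s + 1 ≤ tr (k + t + s) H ∧ ∀ B ∈ F, ¬ Disjoint B H) := by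
    intro B hB
    rw [mem_filter]
    refine ⟨hG hB, ?_, ?_⟩
    · apply G_trace hk
      intro A hAs hAc
      exact hcross A (hsub (mem_powersetCard.2 ⟨hAs, hAc⟩)) B hB
    · intro A hA
      rw [not_disjoint_iff_nonempty_inter]
      exact hcross A hA B hB
  have h5 : G.card ≤ ((powersetCard k (Icc 1 n)).filter
      (fun H => s + 1 ≤ tr (k + t + s) H ∧ ∀ B ∈ F, ¬ Disjoint B H)).card :=
    card_le_card (fun B hB => hGsub B hB)
  have h2 := claimC hk hn (wt F) F le_rfl hF hint hsub
  have e1 := low_split hk hF hsub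
  have e4 := Bstar_card (k := k) (n := n) (l := k + t + s) (s := s) F
  have hZ : ((powersetCard k (Icc 1 n)).filter fun H => s + 1 ≤ tr (k + t + s) H).card
      + ((powersetCard k (Icc 1 n)).filter fun H => tr (k + t + s) H ≤ s).card
      = n.choose k := by
    have h0 := card_filter_add_card_filter_not (s := powersetCard k (Icc 1 n))
      (p := fun H => s + 1 ≤ tr (k + t + s) H)
    have e : (powersetCard k (Icc 1 n)).filter (fun H => ¬ (s + 1 ≤ tr (k + t + s) H))
        = (powersetCard k (Icc 1 n)).filter (fun H => tr (k + t + s) H ≤ s) := by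
      apply filter_congr
      intro H _
      constructor <;> intro h <;> omega
    rw [e] at h0
    rw [card_powersetCard, Nat.card_Icc] at h0
    simpa using h0
  have h7 := lowZ_card (n := n) (k := k) (l := k + t + s) (s := s) hln hk
  have h8 : (powersetCard (k + t) (Icc 1 (k + t + s))).card = (k + t + s).choose (k + t) := by
    rw [card_powersetCard, Nat.card_Icc]
    simp
  have hrw : n - k - t - s = n - (k + t + s) := by omega
  rw [hrw]
  omega
end

section
/- Let k, ℓ, n be integers with k ≥ ℓ ≥ 1 and n ≥ k+ℓ. Let ℱ ⊆ C([n], k) and 𝒢 ⊆ C([n], ℓ) be cross-intersecting families. If 𝒢 is shifted, intersecting and non-trivial (i.e., not all sets of 𝒢 contain a common element), then |ℱ| + |𝒢| ≤ ℓ + 1 + C(n, k) − C(n−ℓ−1, k) − (ℓ+1)·C(n−ℓ−1, k−1). -/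
open Finset


def Shifted (H : Finset (Finset ℕ)) : Prop :=
  ∀ B ∈ H, ∀ i j : ℕ, 1 ≤ i → i < j → i ∉ B → j ∈ B → insert i (B.erase j) ∈ H

def res0 (H : Finset (Finset ℕ)) (n : ℕ) : Finset (Finset ℕ) := H.filter (fun B => n ∉ B)
def res1 (H : Finset (Finset ℕ)) (n : ℕ) : Finset (Finset ℕ) :=
  (H.filter (fun B => n ∈ B)).image (fun B => B.erase n)

lemma mem_res1 {H : Finset (Finset ℕ)} {n : ℕ} {B : Finset ℕ} :
    B ∈ res1 H n ↔ n ∉ B ∧ insert n B ∈ H := by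
  constructor
  · rintro hB
    simp only [res1, mem_image, mem_filter] at hB
    obtain ⟨C, ⟨hC, hnC⟩, rfl⟩ := hB
    refine ⟨notMem_erase _ _, by rwa [insert_erase hnC]⟩
  · rintro ⟨hnB, hB⟩
    simp only [res1, mem_image, mem_filter]
    exact ⟨insert n B, ⟨hB, mem_insert_self _ _⟩, by rw [erase_insert hnB]⟩

lemma mem_res0 {H : Finset (Finset ℕ)} {n : ℕ} {B : Finset ℕ} :
    B ∈ res0 H n ↔ B ∈ H ∧ n ∉ B := mem_filter

lemma card_res (H : Finset (Finset ℕ)) (n : ℕ) :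
    H.card = (res0 H n).card + (res1 H n).card := by
  rw [res0, res1, card_image_of_injOn, add_comm, card_filter_add_card_filter_not]
  intro B hB C hC h
  simp only [coe_filter, Set.mem_setOf_eq] at hB hC
  dsimp only at h
  rw [← insert_erase hB.2, ← insert_erase hC.2, h]

lemma res0_subset {H : Finset (Finset ℕ)} {l N : ℕ} (hH : H ⊆ powersetCard l (Icc 1 N)) :
    res0 H N ⊆ powersetCard l (Icc 1 (N-1)) := by
  intro B hB
  rw [mem_res0] at hB
  obtain ⟨hB1, hB2⟩ := hB
  rw [mem_powersetCard]
  obtain ⟨hs, hc⟩ := mem_powersetCard.mp (hH hB1)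
  refine ⟨fun x hx => ?_, hc⟩
  have h1 := hs hx
  have h2 : x ≠ N := fun h => hB2 (h ▸ hx)
  simp only [mem_Icc] at *
  omega

lemma res1_subset {H : Finset (Finset ℕ)} {l N : ℕ} (hH : H ⊆ powersetCard l (Icc 1 N)) :
    res1 H N ⊆ powersetCard (l-1) (Icc 1 (N-1)) := by
  intro B hB
  rw [mem_res1] at hB
  obtain ⟨hnB, hB⟩ := hB
  rw [mem_powersetCard]
  obtain ⟨hs, hc⟩ := mem_powersetCard.mp (hH hB)
  constructor
  · intro x hx
    have hxN := hs (mem_insert_of_mem hx)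
    have : x ≠ N := fun h => hnB (h ▸ hx)
    simp only [mem_Icc] at *; omega
  · have h1 : (insert N B).card = B.card + 1 := card_insert_of_notMem hnB
    omega

lemma shifted_res0 {H : Finset (Finset ℕ)} {l N : ℕ} (hH : H ⊆ powersetCard l (Icc 1 N))
    (hs : Shifted H) : Shifted (res0 H N) := by
  intro B hB i j h1 hij hiB hjB
  rw [mem_res0] at *
  refine ⟨hs B hB.1 i j h1 hij hiB hjB, ?_⟩
  have hjN : j ≤ N := by
    have := (mem_powersetCard.mp (hH hB.1)).1 hjB
    simp only [mem_Icc] at this; omega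
  simp only [mem_insert, mem_erase, not_or]
  exact ⟨by omega, fun h => hB.2 h.2⟩

lemma shifted_res1 {H : Finset (Finset ℕ)} {l N : ℕ} (hH : H ⊆ powersetCard l (Icc 1 N))
    (hs : Shifted H) : Shifted (res1 H N) := by
  intro B hB i j h1 hij hiB hjB
  rw [mem_res1] at hB
  obtain ⟨hnB, hB⟩ := hB
  have hjN : j ≠ N := fun h => hnB (h ▸ hjB)
  have hiN : i ≠ N := by
    have : j ≤ N := by
      have := (mem_powersetCard.mp (hH hB)).1 (mem_insert_of_mem hjB)
      simp only [mem_Icc] at this; omega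
    omega
  have key := hs _ hB i j h1 hij (by simp only [mem_insert]; push_neg; exact ⟨fun h => hiN h, hiB⟩) (mem_insert_of_mem hjB)
  rw [mem_res1]
  constructor
  · simp only [mem_insert, mem_erase, not_or]
    exact ⟨fun h => hiN h.symm, fun h => hnB h.2⟩
  · have heq : insert N (insert i (B.erase j)) = insert i ((insert N B).erase j) := by
      ext x
      simp only [mem_insert, mem_erase]
      constructor
      · rintro (rfl | (rfl | ⟨hx1, hx2⟩))
        · exact Or.inr ⟨fun h => hjN (h ▸ rfl), Or.inl rfl⟩
        · exact Or.inl rfl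
        · exact Or.inr ⟨hx1, Or.inr hx2⟩
      · rintro (rfl | ⟨hx1, (rfl | hx2)⟩)
        · exact Or.inr (Or.inl rfl)
        · exact Or.inl rfl
        · exact Or.inr (Or.inr ⟨hx1, hx2⟩)
    rw [heq]; exact key


lemma move_lemma {F : Finset (Finset ℕ)} (hsF : Shifted F) (w₀ : ℕ) :
    ∀ s A S Z, A ∈ F → S ⊆ A → (∀ j ∈ S, w₀ < j) → Z ⊆ Icc 1 w₀ → Disjoint Z A →
      S.card = s → Z.card = s → (A \ S) ∪ Z ∈ F := by
  intro s
  induction s with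
  | zero =>
    intro A S Z hA hSA _ _ _ hS hZ
    rw [card_eq_zero] at hS hZ
    subst hS; subst hZ
    simpa using hA
  | succ m ih =>
    intro A S Z hA hSA hSw hZw hdZA hS hZ
    obtain ⟨j, hjS⟩ : S.Nonempty := card_pos.mp (by omega)
    obtain ⟨z, hzZ⟩ : Z.Nonempty := card_pos.mp (by omega)
    have hzIcc := hZw hzZ
    simp only [mem_Icc] at hzIcc
    have hjA : j ∈ A := hSA hjS
    have hzA : z ∉ A := fun h => (disjoint_left.mp hdZA hzZ) h
    have hzj : z < j := lt_of_le_of_lt hzIcc.2 (hSw j hjS)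
    have hA1 : insert z (A.erase j) ∈ F := hsF A hA z j hzIcc.1 hzj hzA hjA
    have key := ih (insert z (A.erase j)) (S.erase j) (Z.erase z) hA1
      (fun x hx => by
        simp only [mem_erase] at hx
        simp only [mem_insert, mem_erase]
        exact Or.inr ⟨hx.1, hSA hx.2⟩)
      (fun x hx => hSw x (mem_of_mem_erase hx))
      (fun x hx => hZw (mem_of_mem_erase hx))
      (by
        rw [disjoint_left]
        intro x hx hx'
        simp only [mem_erase] at hx
        simp only [mem_insert, mem_erase] at hx'
        rcases hx' with rfl | ⟨_, hxA⟩
        · exact hx.1 rfl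
        · exact disjoint_left.mp hdZA hx.2 hxA)
      (by rw [card_erase_of_mem hjS]; omega)
      (by rw [card_erase_of_mem hzZ]; omega)
    have heq : (insert z (A.erase j) \ S.erase j) ∪ Z.erase z = (A \ S) ∪ Z := by
      have hjS' : w₀ < j := hSw j hjS
      have hzS : z ∉ S := fun h => by have := hSw z h; omega
      ext x
      simp only [mem_union, mem_sdiff, mem_insert, mem_erase]
      constructor
      · rintro (⟨(rfl | ⟨hxj, hxA⟩), hx2⟩ | ⟨hxz, hxZ⟩)
        · exact Or.inr hzZ
        · exact Or.inl ⟨hxA, fun h => hx2 ⟨hxj, h⟩⟩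
        · exact Or.inr hxZ
      · rintro (⟨hxA, hxS⟩ | hxZ)
        · refine Or.inl ⟨Or.inr ⟨fun h => hxS (h ▸ hjS), hxA⟩, fun h => hxS h.2⟩
        · by_cases hxz : x = z
          · subst hxz
            exact Or.inl ⟨Or.inl rfl, fun h => hzS h.2⟩
          · exact Or.inr ⟨hxz, hxZ⟩
    rwa [heq] at key

lemma window_lemma {F G : Finset (Finset ℕ)} {k l N : ℕ} (hsF : Shifted F)
    (hF : F ⊆ powersetCard k (Icc 1 N)) (hG : G ⊆ powersetCard l (Icc 1 N))
    (hcross : ∀ A ∈ F, ∀ B ∈ G, (A ∩ B).Nonempty)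
    {A B : Finset ℕ} (hA : A ∈ F) (hB : B ∈ G) :
    (A ∩ B ∩ Icc 1 (k + l - 1)).Nonempty := by
  set w₀ := k + l - 1 with hw₀
  obtain ⟨hAsub, hAcard⟩ := mem_powersetCard.mp (hF hA)
  obtain ⟨hBsub, hBcard⟩ := mem_powersetCard.mp (hG hB)
  by_cases hBw : B ⊆ Icc 1 w₀
  · obtain ⟨x, hx⟩ := hcross A hA B hB
    exact ⟨x, by
      simp only [mem_inter] at hx ⊢
      exact ⟨⟨hx.1, hx.2⟩, hBw hx.2⟩⟩
  · by_contra hempty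
    rw [not_nonempty_iff_eq_empty] at hempty
    -- B has an element outside Icc 1 w₀
    obtain ⟨b, hbB, hbw⟩ := not_subset.mp hBw
    have hBint : (B ∩ Icc 1 w₀).card < l := by
      have hss : B ∩ Icc 1 w₀ ⊂ B := by
        refine ⟨inter_subset_left, fun h => hbw (mem_of_mem_inter_right (h hbB))⟩
      have := card_lt_card hss
      omega
    set S := A.filter (fun x => w₀ < x) with hSdef
    set Z := Icc 1 w₀ \ (A ∪ B) with hZdef
    have hScard : (A ∩ Icc 1 w₀).card + S.card = k := by
      rw [← hAcard]
      have : A ∩ Icc 1 w₀ = A.filter (fun x => ¬ w₀ < x) := by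
        ext x
        simp only [mem_inter, mem_filter, mem_Icc, not_lt]
        constructor
        · rintro ⟨h1, h2, h3⟩; exact ⟨h1, h3⟩
        · rintro ⟨h1, h2⟩
          have := hAsub h1
          simp only [mem_Icc] at this
          exact ⟨h1, this.1, h2⟩
      rw [this, hSdef, add_comm, card_filter_add_card_filter_not]
    have hZcard : S.card ≤ Z.card := by
      have h1 : Icc 1 w₀ ⊆ (A ∩ Icc 1 w₀) ∪ (B ∩ Icc 1 w₀) ∪ Z := by
        intro x hx
        simp only [hZdef, mem_union, mem_sdiff, mem_inter]
        by_cases hxA : x ∈ A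
        · exact Or.inl (Or.inl ⟨hxA, hx⟩)
        · by_cases hxB : x ∈ B
          · exact Or.inl (Or.inr ⟨hxB, hx⟩)
          · exact Or.inr ⟨hx, by simp [hxA, hxB]⟩
      have h2 := card_le_card h1
      have h3 := card_union_le ((A ∩ Icc 1 w₀) ∪ (B ∩ Icc 1 w₀)) Z
      have h4 := card_union_le (A ∩ Icc 1 w₀) (B ∩ Icc 1 w₀)
      have h5 : (Icc 1 w₀).card = w₀ := by rw [Nat.card_Icc]; omega
      -- w₀ = k + l - 1 ≥ ... need k ≥ 1? if k = 0 then A = ∅, A ∩ B empty contradiction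
      have hk1 : 1 ≤ k := by
        rcases Nat.eq_zero_or_pos k with hk | hk
        · exfalso
          obtain ⟨x, hx⟩ := hcross A hA B hB
          have hAe : A = ∅ := card_eq_zero.mp (by omega)
          rw [hAe] at hx
          simp at hx
        · exact hk
      omega
    obtain ⟨Z₀, hZ₀sub, hZ₀card⟩ := exists_subset_card_eq hZcard
    have hA' : (A \ S) ∪ Z₀ ∈ F := by
      refine move_lemma hsF w₀ S.card A S Z₀ hA (filter_subset _ _)
        (fun j hj => (mem_filter.mp hj).2)
        (fun x hx => (mem_sdiff.mp (hZ₀sub hx)).1)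
        ?_ rfl hZ₀card
      rw [disjoint_left]
      intro x hx hxA
      have := mem_sdiff.mp (hZ₀sub hx)
      exact this.2 (mem_union_left _ hxA)
    obtain ⟨x, hx⟩ := hcross _ hA' B hB
    obtain ⟨hx1, hxB⟩ := mem_inter.mp hx
    rcases mem_union.mp hx1 with h1 | h2
    · obtain ⟨hxA, hxS⟩ := mem_sdiff.mp h1
      have hxS' : ¬ (w₀ < x) := fun hc => hxS (mem_filter.mpr ⟨hxA, hc⟩)
      have hxw : x ∈ Icc 1 w₀ := by
        have := hAsub hxA
        simp only [mem_Icc] at this ⊢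
        omega
      have : x ∈ A ∩ B ∩ Icc 1 w₀ := by
        simp only [mem_inter]
        exact ⟨⟨hxA, hxB⟩, hxw⟩
      rw [hempty] at this
      exact absurd this (notMem_empty x)
    · have := mem_sdiff.mp (hZ₀sub h2)
      exact this.2 (mem_union_right _ hxB)

lemma hall_lemma {F G : Finset (Finset ℕ)} {k l N : ℕ} (hlk : l ≤ k) (hN : k + l ≤ N)
    (hF : F ⊆ powersetCard k (Icc 1 N)) (hG : G ⊆ powersetCard l (Icc 1 N))
    (hcross : ∀ A ∈ F, ∀ B ∈ G, (A ∩ B).Nonempty) :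
    F.card + G.card ≤ (powersetCard k (Icc 1 N)).card := by
  classical
  set t : {B // B ∈ G} → Finset (Finset ℕ) :=
    fun B => powersetCard k (Icc 1 N \ B.1) with ht
  have hBsub : ∀ B : {B // B ∈ G}, B.1 ⊆ Icc 1 N ∧ B.1.card = l :=
    fun B => mem_powersetCard.mp (hG B.2)
  have hcard_t : ∀ B : {B // B ∈ G}, (t B).card = Nat.choose (N - l) k := by
    intro B
    rw [ht]
    dsimp only
    rw [card_powersetCard, card_sdiff_of_subset (hBsub B).1, (hBsub B).2, Nat.card_Icc]
    congr 1
  have hchoose_le : Nat.choose (N - k) l ≤ Nat.choose (N - l) k := by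
    have h1 : Nat.choose (N - k) l = Nat.choose (N - k) (N - k - l) :=
      (Nat.choose_symm (by omega)).symm
    have h2 : Nat.choose (N - l) k = Nat.choose (N - l) (N - l - k) :=
      (Nat.choose_symm (by omega)).symm
    have h3 : N - k - l = N - l - k := by omega
    rw [h1, h2, ← h3]
    exact Nat.choose_le_choose _ (by omega)
  have hchoose_pos : 0 < Nat.choose (N - l) k := Nat.choose_pos (by omega)
  have hhall : ∀ s : Finset {B // B ∈ G}, s.card ≤ (s.biUnion t).card := by
    intro s
    set U := s.biUnion t with hU
    have htsubU : ∀ B ∈ s, t B ⊆ U := fun B hB => subset_biUnion_of_mem t hB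
    have e : ∑ B ∈ s, (t B).card = ∑ A ∈ U, (s.filter (fun B => A ∈ t B)).card := by
      have e2 : ∀ B ∈ s, (t B).card = ∑ A ∈ U, (if A ∈ t B then 1 else 0) := by
        intro B hB
        rw [Finset.sum_boole]
        rw [Finset.filter_mem_eq_inter, Finset.inter_eq_right.mpr (htsubU B hB)]
        simp
      rw [Finset.sum_congr rfl e2, Finset.sum_comm]
      exact Finset.sum_congr rfl (fun A hA => (Finset.card_filter _ _).symm)
    have hUA : ∀ A ∈ U, A ⊆ Icc 1 N ∧ A.card = k := by
      intro A hA
      obtain ⟨B, hBs, hAB⟩ := mem_biUnion.mp hA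
      obtain ⟨h1, h2⟩ := mem_powersetCard.mp hAB
      exact ⟨h1.trans sdiff_subset, h2⟩
    have hfiber : ∀ A ∈ U, (s.filter (fun B => A ∈ t B)).card ≤ Nat.choose (N - k) l := by
      intro A hA
      have : ((s.filter (fun B => A ∈ t B)).image (fun B => B.1)) ⊆
          powersetCard l (Icc 1 N \ A) := by
        intro C hC
        obtain ⟨B, hB, rfl⟩ := mem_image.mp hC
        obtain ⟨hBs, hAtB⟩ := mem_filter.mp hB
        rw [mem_powersetCard]
        refine ⟨fun x hx => ?_, (hBsub B).2⟩
        rw [mem_sdiff]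
        refine ⟨(hBsub B).1 hx, fun hxA => ?_⟩
        have := (mem_powersetCard.mp hAtB).1 hxA
        rw [mem_sdiff] at this
        exact this.2 hx
      have hinj : ((s.filter (fun B => A ∈ t B)).image (fun B => B.1)).card
          = (s.filter (fun B => A ∈ t B)).card :=
        card_image_of_injective _ Subtype.val_injective
      calc (s.filter (fun B => A ∈ t B)).card
          = ((s.filter (fun B => A ∈ t B)).image (fun B => B.1)).card := hinj.symm
        _ ≤ (powersetCard l (Icc 1 N \ A)).card := card_le_card this
        _ = Nat.choose (N - k) l := by
            rw [card_powersetCard, card_sdiff_of_subset (hUA A hA).1, (hUA A hA).2, Nat.card_Icc]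
            congr 1
    have key : s.card * Nat.choose (N - l) k ≤ U.card * Nat.choose (N - k) l := by
      calc s.card * Nat.choose (N - l) k
          = ∑ B ∈ s, (t B).card := by
            rw [Finset.sum_congr rfl (fun B _ => hcard_t B), sum_const, smul_eq_mul]
        _ = ∑ A ∈ U, (s.filter (fun B => A ∈ t B)).card := e
        _ ≤ ∑ A ∈ U, Nat.choose (N - k) l := Finset.sum_le_sum hfiber
        _ = U.card * Nat.choose (N - k) l := by rw [sum_const, smul_eq_mul]
    have : s.card * Nat.choose (N - l) k ≤ U.card * Nat.choose (N - l) k :=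
      key.trans (Nat.mul_le_mul_left _ hchoose_le)
    exact Nat.le_of_mul_le_mul_right this hchoose_pos
  obtain ⟨f, hfinj, hft⟩ := (Finset.all_card_le_biUnion_card_iff_existsInjective' t).mp hhall
  have himg : (G.attach.image f) ⊆ powersetCard k (Icc 1 N) \ F := by
    intro A hA
    obtain ⟨B, hB, rfl⟩ := mem_image.mp hA
    have hfB := hft B
    obtain ⟨h1, h2⟩ := mem_powersetCard.mp hfB
    rw [mem_sdiff]
    constructor
    · exact mem_powersetCard.mpr ⟨h1.trans sdiff_subset, h2⟩
    · intro hFB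
      obtain ⟨x, hx⟩ := hcross _ hFB B.1 B.2
      rw [mem_inter] at hx
      have := h1 hx.1
      rw [mem_sdiff] at this
      exact this.2 hx.2
  have hGcard : G.card ≤ (powersetCard k (Icc 1 N) \ F).card := by
    calc G.card = G.attach.card := card_attach.symm
      _ = (G.attach.image f).card := (card_image_of_injective _ hfinj).symm
      _ ≤ _ := card_le_card himg
  have h1 := card_sdiff_of_subset hF
  have h2 := card_le_card hF
  omega



def Tset (N k w : ℕ) : Finset (Finset ℕ) :=
  (powersetCard k (Icc 1 N)).filter fun A => 2 ≤ (A ∩ Icc 1 w).card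

lemma mem_Tset {N k w : ℕ} {A : Finset ℕ} :
    A ∈ Tset N k w ↔ A ⊆ Icc 1 N ∧ A.card = k ∧ 2 ≤ (A ∩ Icc 1 w).card := by
  simp only [Tset, mem_filter, mem_powersetCard]
  tauto


lemma Tset_res0 {N k w : ℕ} (hN : 1 ≤ N) :
    res0 (Tset N k w) N = Tset (N-1) k w := by
  ext A
  simp only [res0, mem_filter, mem_Tset]
  constructor
  · rintro ⟨⟨h1, h2, h3⟩, h4⟩
    refine ⟨fun x hx => ?_, h2, h3⟩
    have := h1 hx
    have : x ≠ N := fun h => h4 (h ▸ hx)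
    simp only [mem_Icc] at *
    omega
  · rintro ⟨h1, h2, h3⟩
    have hNA : N ∉ A := fun h => by
      have := h1 h
      simp only [mem_Icc] at this
      omega
    refine ⟨⟨fun x hx => ?_, h2, h3⟩, hNA⟩
    have := h1 hx
    simp only [mem_Icc] at *
    omega

lemma Tset_res1 {N k w : ℕ} (hN : w < N) (hk : 1 ≤ k) :
    res1 (Tset N k w) N = Tset (N-1) (k-1) w := by
  ext A
  rw [mem_res1, mem_Tset, mem_Tset]
  constructor
  · rintro ⟨hnA, h1, h2, h3⟩
    have hA1 : A ⊆ Icc 1 (N-1) := by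
      intro x hx
      have := h1 (mem_insert_of_mem hx)
      have : x ≠ N := fun h => hnA (h ▸ hx)
      simp only [mem_Icc] at *
      omega
    have hcard : A.card = k - 1 := by
      have := card_insert_of_notMem hnA
      omega
    have htrace : insert N A ∩ Icc 1 w = A ∩ Icc 1 w := by
      ext x
      simp only [mem_inter, mem_insert, mem_Icc]
      constructor
      · rintro ⟨rfl | hx, h⟩
        · omega
        · exact ⟨hx, h⟩
      · rintro ⟨hx, h⟩
        exact ⟨Or.inr hx, h⟩
    rw [htrace] at h3
    exact ⟨hA1, hcard, h3⟩
  · rintro ⟨h1, h2, h3⟩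
    have hnA : N ∉ A := fun h => by
      have := h1 h
      simp only [mem_Icc] at this
      omega
    have htrace : insert N A ∩ Icc 1 w = A ∩ Icc 1 w := by
      ext x
      simp only [mem_inter, mem_insert, mem_Icc]
      constructor
      · rintro ⟨rfl | hx, h⟩
        · omega
        · exact ⟨hx, h⟩
      · rintro ⟨hx, h⟩
        exact ⟨Or.inr hx, h⟩
    refine ⟨hnA, ?_, ?_, ?_⟩
    · intro x hx
      rcases mem_insert.mp hx with rfl | hx
      · simp only [mem_Icc]; omega
      · have := h1 hx
        simp only [mem_Icc] at *
        omega
    · rw [card_insert_of_notMem hnA]; omega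
    · rw [htrace]; exact h3

lemma Tset_pascal {N k w : ℕ} (hN : w < N) (hk : 1 ≤ k) :
    (Tset N k w).card = (Tset (N-1) k w).card + (Tset (N-1) (k-1) w).card := by
  rw [card_res (Tset N k w) N, Tset_res0 (by omega), Tset_res1 hN hk]

lemma Tset_full {N k w : ℕ} (hNw : N ≤ w) (hk : 2 ≤ k) :
    Tset N k w = powersetCard k (Icc 1 N) := by
  rw [Tset, filter_true_of_mem]
  intro A hA
  obtain ⟨h1, h2⟩ := mem_powersetCard.mp hA
  have : A ∩ Icc 1 w = A := by
    rw [inter_eq_left]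
    intro x hx
    have := h1 hx
    simp only [mem_Icc] at *
    omega
  rw [this, h2]
  exact hk


lemma Tset_count {n k l : ℕ} (hln : l + 1 ≤ n) (hk : 1 ≤ k) :
    Nat.choose n k =
      (Tset n k (l+1)).card + Nat.choose (n-l-1) k + (l+1) * Nat.choose (n-l-1) (k-1) := by
  classical
  have hPcard : (powersetCard k (Icc 1 n)).card = Nat.choose n k := by
    rw [card_powersetCard, Nat.card_Icc]
    congr 1
  have h1 : (powersetCard k (Icc 1 n)).card = (Tset n k (l+1)).card
      + ((powersetCard k (Icc 1 n)).filter (fun A => ¬ 2 ≤ (A ∩ Icc 1 (l+1)).card)).card := by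
    rw [Tset]
    exact (card_filter_add_card_filter_not
      (p := fun A => 2 ≤ (A ∩ Icc 1 (l+1)).card)).symm
  have hsplit : (powersetCard k (Icc 1 n)).filter (fun A => ¬ 2 ≤ (A ∩ Icc 1 (l+1)).card)
      = ((powersetCard k (Icc 1 n)).filter (fun A => (A ∩ Icc 1 (l+1)).card = 0))
        ∪ ((powersetCard k (Icc 1 n)).filter (fun A => (A ∩ Icc 1 (l+1)).card = 1)) := by
    ext A
    simp only [mem_filter, mem_union, not_le]
    constructor
    · rintro ⟨hAP, hlt⟩
      have : (A ∩ Icc 1 (l+1)).card = 0 ∨ (A ∩ Icc 1 (l+1)).card = 1 := by omega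
      rcases this with h | h
      · exact Or.inl ⟨hAP, h⟩
      · exact Or.inr ⟨hAP, h⟩
    · rintro (⟨hAP, h⟩ | ⟨hAP, h⟩) <;> exact ⟨hAP, by omega⟩
  have hdisj : Disjoint ((powersetCard k (Icc 1 n)).filter (fun A => (A ∩ Icc 1 (l+1)).card = 0))
      ((powersetCard k (Icc 1 n)).filter (fun A => (A ∩ Icc 1 (l+1)).card = 1)) := by
    rw [disjoint_left]
    intro A hA hA'
    rw [mem_filter] at hA hA'
    omega
  have hIccCard : (Icc (l + 2) n).card = n - l - 1 := by
    rw [Nat.card_Icc]; omega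
  have h3 : ((powersetCard k (Icc 1 n)).filter (fun A => (A ∩ Icc 1 (l+1)).card = 0)).card
      = Nat.choose (n-l-1) k := by
    have heq : (powersetCard k (Icc 1 n)).filter (fun A => (A ∩ Icc 1 (l+1)).card = 0)
        = powersetCard k (Icc (l+2) n) := by
      ext A
      simp only [mem_filter, mem_powersetCard, card_eq_zero]
      constructor
      · rintro ⟨⟨h1', h2'⟩, h3'⟩
        refine ⟨fun x hx => ?_, h2'⟩
        have hx1 := h1' hx
        have hx2 : x ∉ Icc 1 (l+1) := fun hc => by
          have : x ∈ A ∩ Icc 1 (l+1) := mem_inter.mpr ⟨hx, hc⟩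
          rw [h3'] at this
          exact notMem_empty x this
        simp only [mem_Icc] at *
        omega
      · rintro ⟨h1', h2'⟩
        refine ⟨⟨fun x hx => ?_, h2'⟩, ?_⟩
        · have := h1' hx
          simp only [mem_Icc] at *
          omega
        · rw [eq_empty_iff_forall_notMem]
          intro x hx
          rw [mem_inter] at hx
          have h5 := h1' hx.1
          have h6 := hx.2
          simp only [mem_Icc] at *
          omega
    rw [heq, card_powersetCard, hIccCard]
  have heach : ∀ x ∈ Icc 1 (l+1),
      ((powersetCard k (Icc 1 n)).filter (fun A => A ∩ Icc 1 (l+1) = {x})).card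
        = Nat.choose (n-l-1) (k-1) := by
    intro x hxI
    simp only [mem_Icc] at hxI
    have : ((powersetCard k (Icc 1 n)).filter (fun A => A ∩ Icc 1 (l+1) = {x})).card
        = (powersetCard (k-1) (Icc (l+2) n)).card := by
      apply card_nbij' (fun A => A.erase x) (fun C => insert x C)
      · intro A hA
        rw [mem_coe, mem_filter, mem_powersetCard] at hA
        obtain ⟨⟨hA1, hA2⟩, hA3⟩ := hA
        have hxA : x ∈ A := by
          have : x ∈ A ∩ Icc 1 (l+1) := hA3 ▸ mem_singleton_self x
          exact (mem_inter.mp this).1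
        rw [mem_coe, mem_powersetCard]
        constructor
        · intro y hy
          rw [mem_erase] at hy
          have hy1 := hA1 hy.2
          have hy2 : y ∉ Icc 1 (l+1) := fun hc => by
            have : y ∈ A ∩ Icc 1 (l+1) := mem_inter.mpr ⟨hy.2, hc⟩
            rw [hA3, mem_singleton] at this
            exact hy.1 this
          simp only [mem_Icc] at *
          omega
        · rw [card_erase_of_mem hxA, hA2]
      · intro C hC
        rw [mem_coe, mem_powersetCard] at hC
        obtain ⟨hC1, hC2⟩ := hC
        have hxC : x ∉ C := fun hc => by
          have := hC1 hc
          simp only [mem_Icc] at this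
          omega
        rw [mem_coe, mem_filter, mem_powersetCard]
        refine ⟨⟨?_, ?_⟩, ?_⟩
        · intro y hy
          rcases mem_insert.mp hy with rfl | hy'
          · simp only [mem_Icc]; omega
          · have := hC1 hy'
            simp only [mem_Icc] at *
            omega
        · rw [card_insert_of_notMem hxC, hC2]
          omega
        · ext y
          simp only [mem_inter, mem_insert, mem_singleton, mem_Icc]
          constructor
          · rintro ⟨rfl | hy, hy2⟩
            · rfl
            · have := hC1 hy
              simp only [mem_Icc] at this
              omega
          · rintro rfl
            exact ⟨Or.inl rfl, by omega⟩
      · intro A hA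
        rw [mem_coe, mem_filter] at hA
        have hxA : x ∈ A := by
          have : x ∈ A ∩ Icc 1 (l+1) := hA.2 ▸ mem_singleton_self x
          exact (mem_inter.mp this).1
        exact insert_erase hxA
      · intro C hC
        rw [mem_coe, mem_powersetCard] at hC
        have hxC : x ∉ C := fun hc => by
          have := hC.1 hc
          simp only [mem_Icc] at this
          omega
        exact erase_insert hxC
    rw [this, card_powersetCard, hIccCard]
  have hbiU : (powersetCard k (Icc 1 n)).filter (fun A => (A ∩ Icc 1 (l+1)).card = 1)
      = (Icc 1 (l+1)).biUnion
        (fun x => (powersetCard k (Icc 1 n)).filter (fun A => A ∩ Icc 1 (l+1) = {x})) := by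
    ext A
    simp only [mem_biUnion, mem_filter]
    constructor
    · rintro ⟨hA, hc⟩
      obtain ⟨x, hx⟩ := card_eq_one.mp hc
      refine ⟨x, ?_, hA, hx⟩
      have : x ∈ A ∩ Icc 1 (l+1) := hx ▸ mem_singleton_self x
      exact (mem_inter.mp this).2
    · rintro ⟨x, hxI, hA, hx⟩
      exact ⟨hA, by rw [hx, card_singleton]⟩
  have h4 : ((powersetCard k (Icc 1 n)).filter (fun A => (A ∩ Icc 1 (l+1)).card = 1)).card
      = (l+1) * Nat.choose (n-l-1) (k-1) := by
    rw [hbiU, card_biUnion]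
    · rw [Finset.sum_congr rfl heach, sum_const, smul_eq_mul, Nat.card_Icc]
      congr 1
    · intro x hx y hy hxy
      rw [Function.onFun, disjoint_left]
      intro A hA hA'
      rw [mem_filter] at hA hA'
      exact hxy (singleton_injective (hA.2.symm.trans hA'.2))
  rw [hsplit, card_union_of_disjoint hdisj] at h1
  omega


lemma seg_mem {G : Finset (Finset ℕ)} {l n : ℕ} (hG : G ⊆ powersetCard l (Icc 1 n))
    (hsG : Shifted G) :
    ∀ m B, B.sum id = m → B ∈ G → 1 ∉ B → Icc 2 (l+1) ∈ G := by
  intro m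
  induction m using Nat.strong_induction_on with
  | _ m ih =>
    intro B hsum hBG h1B
    obtain ⟨hBsub, hBcard⟩ := mem_powersetCard.mp (hG hBG)
    have hseg_card : (Icc 2 (l+1)).card = l := by rw [Nat.card_Icc]; omega
    by_cases heq : B = Icc 2 (l+1)
    · rwa [heq] at hBG
    · have hj : ∃ j ∈ B, j ∉ Icc 2 (l+1) := by
        by_contra hc
        push_neg at hc
        exact heq (eq_of_subset_of_card_le hc (by omega))
      have hi : ∃ i ∈ Icc 2 (l+1), i ∉ B := by
        by_contra hc
        push_neg at hc
        exact heq (eq_of_subset_of_card_le hc (by omega)).symm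
      obtain ⟨j, hjB, hjseg⟩ := hj
      obtain ⟨i, hiseg, hiB⟩ := hi
      have hjIcc := hBsub hjB
      simp only [mem_Icc] at hjIcc hiseg hjseg
      have hj1 : j ≠ 1 := fun h => h1B (h ▸ hjB)
      have hjl : l + 2 ≤ j := by omega
      have hij : i < j := by omega
      have hB' : insert i (B.erase j) ∈ G := hsG B hBG i j (by omega) hij hiB hjB
      have h1B' : 1 ∉ insert i (B.erase j) := by
        simp only [mem_insert, mem_erase, not_or]
        exact ⟨by omega, fun h => h1B h.2⟩
      have hsum' : (insert i (B.erase j)).sum id < m := by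
        have h2 : i ∉ B.erase j := fun h => hiB (mem_of_mem_erase h)
        have h3 : (insert i (B.erase j)).sum id = i + (B.erase j).sum id :=
          sum_insert h2
        have h4 : (B.erase j).sum id + j = B.sum id := by
          have := Finset.sum_erase_add B id hjB
          simpa using this
        omega
      exact ih _ hsum' _ rfl hB' h1B'

lemma Dfam_sub {G : Finset (Finset ℕ)} {l n : ℕ} (hG : G ⊆ powersetCard l (Icc 1 n))
    (hsG : Shifted G) (hln : l + 1 ≤ n) (hex : ∃ B ∈ G, 1 ∉ B) :
    powersetCard l (Icc 1 (l+1)) ⊆ G := by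
  obtain ⟨B₀, hB₀, h1B₀⟩ := hex
  have hseg : Icc 2 (l+1) ∈ G := seg_mem hG hsG _ B₀ rfl hB₀ h1B₀
  intro D hD
  obtain ⟨hDsub, hDcard⟩ := mem_powersetCard.mp hD
  have hIcard : (Icc 1 (l+1)).card = l + 1 := by rw [Nat.card_Icc]; omega
  have hscard : ((Icc 1 (l+1)) \ D).card = 1 := by
    rw [card_sdiff_of_subset hDsub, hIcard, hDcard]
    omega
  obtain ⟨i, hi⟩ := card_eq_one.mp hscard
  have hiIcc : i ∈ Icc 1 (l+1) := by
    have : i ∈ Icc 1 (l+1) \ D := hi ▸ mem_singleton_self i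
    exact (mem_sdiff.mp this).1
  have hiD : i ∉ D := by
    have : i ∈ Icc 1 (l+1) \ D := hi ▸ mem_singleton_self i
    exact (mem_sdiff.mp this).2
  have hDeq : D = Icc 1 (l+1) \ {i} := by
    rw [← hi, sdiff_sdiff_right_self]
    exact (inf_eq_right.mpr hDsub).symm
  simp only [mem_Icc] at hiIcc
  by_cases hi1 : i = 1
  · have : D = Icc 2 (l+1) := by
      rw [hDeq, hi1]
      ext x
      simp only [mem_sdiff, mem_Icc, mem_singleton]
      omega
    rwa [this]
  · have hi2 : 2 ≤ i := by omega
    have hiseg : i ∈ Icc 2 (l+1) := by simp only [mem_Icc]; omega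
    have h1seg : (1:ℕ) ∉ Icc 2 (l+1) := by simp only [mem_Icc]; omega
    have hB' : insert 1 ((Icc 2 (l+1)).erase i) ∈ G :=
      hsG _ hseg 1 i le_rfl (by omega) h1seg hiseg
    have : D = insert 1 ((Icc 2 (l+1)).erase i) := by
      rw [hDeq]
      ext x
      simp only [mem_sdiff, mem_Icc, mem_singleton, mem_insert, mem_erase]
      omega
    rwa [this]

lemma trace_two {G : Finset (Finset ℕ)} {l : ℕ} (hl : 1 ≤ l)
    (hD : powersetCard l (Icc 1 (l+1)) ⊆ G) {A : Finset ℕ}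
    (hmeet : ∀ B ∈ G, (A ∩ B).Nonempty) : 2 ≤ (A ∩ Icc 1 (l+1)).card := by
  by_contra hc
  push_neg at hc
  have hsub : ∃ x, x ∈ Icc 1 (l+1) ∧ A ∩ Icc 1 (l+1) ⊆ {x} := by
    interval_cases h : (A ∩ Icc 1 (l+1)).card
    · exact ⟨1, by simp only [mem_Icc]; omega, by rw [card_eq_zero.mp h]; exact empty_subset _⟩
    · obtain ⟨x, hx⟩ := card_eq_one.mp h
      refine ⟨x, ?_, hx ▸ subset_rfl⟩
      have : x ∈ A ∩ Icc 1 (l+1) := hx ▸ mem_singleton_self x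
      exact (mem_inter.mp this).2
  obtain ⟨x, hxIcc, hsubx⟩ := hsub
  have hDmem : (Icc 1 (l+1)).erase x ∈ G := by
    apply hD
    rw [mem_powersetCard]
    refine ⟨erase_subset _ _, ?_⟩
    rw [card_erase_of_mem hxIcc, Nat.card_Icc]
    omega
  obtain ⟨y, hy⟩ := hmeet _ hDmem
  rw [mem_inter, mem_erase] at hy
  obtain ⟨hyA, hyx, hyIcc⟩ := hy
  have : y ∈ A ∩ Icc 1 (l+1) := mem_inter.mpr ⟨hyA, hyIcc⟩
  exact hyx (mem_singleton.mp (hsubx this))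

lemma maxF_shifted {G : Finset (Finset ℕ)} {k n : ℕ} (hsG : Shifted G) :
    Shifted ((powersetCard k (Icc 1 n)).filter (fun A => ∀ B ∈ G, (A ∩ B).Nonempty)) := by
  intro A hA i j h1 hij hiA hjA
  rw [mem_filter, mem_powersetCard] at hA
  obtain ⟨⟨hAsub, hAcard⟩, hAmeet⟩ := hA
  rw [mem_filter, mem_powersetCard]
  have hjn : j ∈ Icc 1 n := hAsub hjA
  simp only [mem_Icc] at hjn
  refine ⟨⟨?_, ?_⟩, ?_⟩
  · intro x hx
    rcases mem_insert.mp hx with rfl | hx'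
    · simp only [mem_Icc]; omega
    · exact hAsub (mem_of_mem_erase hx')
  · rw [card_insert_of_notMem (fun h => hiA (mem_of_mem_erase h)),
      card_erase_of_mem hjA, hAcard]
    have : 1 ≤ k := by
      rw [← hAcard]
      exact card_pos.mpr ⟨j, hjA⟩
    omega
  · intro B hB
    by_contra hempty
    rw [not_nonempty_iff_eq_empty] at hempty
    have hABj : A ∩ B ⊆ {j} := by
      intro y hy
      rw [mem_inter] at hy
      rw [mem_singleton]
      by_contra hyj
      have : y ∈ insert i (A.erase j) ∩ B :=
        mem_inter.mpr ⟨mem_insert_of_mem (mem_erase.mpr ⟨hyj, hy.1⟩), hy.2⟩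
      rw [hempty] at this
      exact notMem_empty y this
    have hjB : j ∈ B := by
      obtain ⟨y, hy⟩ := hAmeet B hB
      have := mem_singleton.mp (hABj hy)
      subst this
      exact (mem_inter.mp hy).2
    have hiB : i ∉ B := fun h => by
      have : i ∈ insert i (A.erase j) ∩ B := mem_inter.mpr ⟨mem_insert_self i _, h⟩
      rw [hempty] at this
      exact notMem_empty i this
    have hB' : insert i (B.erase j) ∈ G := hsG B hB i j h1 hij hiB hjB
    obtain ⟨y, hy⟩ := hAmeet _ hB'
    rw [mem_inter, mem_insert, mem_erase] at hy
    obtain ⟨hyA, rfl | ⟨hyj, hyB⟩⟩ := hy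
    · exact hiA hyA
    · exact hyj (mem_singleton.mp (hABj (mem_inter.mpr ⟨hyA, hyB⟩)))

lemma insert_inter_Icc {A : Finset ℕ} {N w : ℕ} (h : w < N) :
    insert N A ∩ Icc 1 w = A ∩ Icc 1 w := by
  ext x
  simp only [mem_inter, mem_insert, mem_Icc]
  constructor
  · rintro ⟨rfl | hx, hw⟩
    · omega
    · exact ⟨hx, hw⟩
  · rintro ⟨hx, hw⟩
    exact ⟨Or.inr hx, hw⟩

theorem subthm (N : ℕ) : ∀ (k l w : ℕ) (F G : Finset (Finset ℕ)),
    l ≤ k → k + l ≤ N → l + 2 ≤ w →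
    F ⊆ powersetCard k (Icc 1 N) → G ⊆ powersetCard l (Icc 1 N) →
    (∀ A ∈ F, 2 ≤ (A ∩ Icc 1 w).card) → (∀ B ∈ G, 2 ≤ (B ∩ Icc 1 w).card) →
    (∀ A ∈ F, ∀ B ∈ G, (A ∩ B).Nonempty) → Shifted F → Shifted G →
    F.card + G.card ≤ (Tset N k w).card := by
  induction N using Nat.strong_induction_on with
  | _ N ih =>
    intro k l w F G hlk hN hw hF hG hTF hTG hcross hsF hsG
    have hFT : F ⊆ Tset N k w := by
      intro A hA
      obtain ⟨h1, h2⟩ := mem_powersetCard.mp (hF hA)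
      exact mem_Tset.mpr ⟨h1, h2, hTF A hA⟩
    by_cases hl1 : l ≤ 1
    · -- G is empty
      have hGempty : G = ∅ := by
        rw [eq_empty_iff_forall_notMem]
        intro B hB
        have h2 := hTG B hB
        have h3 : (B ∩ Icc 1 w).card ≤ B.card := card_le_card inter_subset_left
        have h4 := (mem_powersetCard.mp (hG hB)).2
        omega
      rw [hGempty, card_empty]
      simpa using card_le_card hFT
    · push_neg at hl1
      have hk2 : 2 ≤ k := le_trans hl1 hlk
      by_cases hNkl : N ≤ k + l
      · -- base case: N = k + l, use complementation
        have hNeq : N = k + l := le_antisymm hNkl hN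
        have himg : ∀ B ∈ G, Icc 1 N \ B ∈ Tset N k w \ F := by
          intro B hB
          obtain ⟨hBsub, hBcard⟩ := mem_powersetCard.mp (hG hB)
          rw [mem_sdiff, mem_Tset]
          refine ⟨⟨sdiff_subset, ?_, ?_⟩, ?_⟩
          · rw [card_sdiff_of_subset hBsub, Nat.card_Icc, hBcard]
            omega
          · have hsub2 : Icc 1 (l+2) \ B ⊆ (Icc 1 N \ B) ∩ Icc 1 w := by
              intro x hx
              rw [mem_sdiff] at hx
              obtain ⟨hx1, hx2⟩ := hx
              simp only [mem_Icc] at hx1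
              refine mem_inter.mpr ⟨mem_sdiff.mpr ⟨?_, hx2⟩, ?_⟩ <;>
                simp only [mem_Icc] <;> omega
            have hle := card_le_card hsub2
            have : (l + 2 : ℕ) - l ≤ (Icc 1 (l+2) \ B).card := by
              have := le_card_sdiff B (Icc 1 (l+2))
              rw [Nat.card_Icc, hBcard] at this
              omega
            omega
          · intro hmem
            obtain ⟨x, hx⟩ := hcross _ hmem B hB
            rw [mem_inter, mem_sdiff] at hx
            exact hx.1.2 hx.2
        have hinj : Set.InjOn (fun B => Icc 1 N \ B) G := by
          intro B hB C hC h
          dsimp only at h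
          have hBsub := (mem_powersetCard.mp (hG hB)).1
          have hCsub := (mem_powersetCard.mp (hG hC)).1
          have h1 : Icc 1 N \ (Icc 1 N \ B) = Icc 1 N \ (Icc 1 N \ C) := by rw [h]
          rwa [sdiff_sdiff_right_self, sdiff_sdiff_right_self,
            inf_eq_right.mpr hBsub, inf_eq_right.mpr hCsub] at h1
        have hcard : G.card ≤ (Tset N k w \ F).card := by
          rw [← card_image_of_injOn hinj]
          apply card_le_card
          intro A hA
          obtain ⟨B, hB, rfl⟩ := mem_image.mp hA
          exact himg B hB
        have h1 := card_sdiff_of_subset hFT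
        have h2 := card_le_card hFT
        omega
      · push_neg at hNkl
        by_cases hNw : N ≤ w
        · -- middle regime: Tset is everything, use Hall
          rw [Tset_full hNw hk2]
          exact hall_lemma hlk (by omega) hF hG hcross
        · push_neg at hNw
          -- recursive case
          have hN1 : 1 ≤ N := by omega
          have e1 := card_res F N
          have e2 := card_res G N
          have IH1 := ih (N-1) (by omega) k l w (res0 F N) (res0 G N) hlk (by omega) hw
            (res0_subset hF) (res0_subset hG)
            (fun A hA => hTF A (mem_res0.mp hA).1)
            (fun B hB => hTG B (mem_res0.mp hB).1)
            (fun A hA B hB => hcross A (mem_res0.mp hA).1 B (mem_res0.mp hB).1)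
            (shifted_res0 hF hsF) (shifted_res0 hG hsG)
          have IH2 := ih (N-1) (by omega) (k-1) (l-1) w (res1 F N) (res1 G N)
            (by omega) (by omega) (by omega)
            (res1_subset hF) (res1_subset hG)
            (fun A hA => by
              obtain ⟨hnA, hins⟩ := mem_res1.mp hA
              have := hTF _ hins
              rwa [insert_inter_Icc hNw] at this)
            (fun B hB => by
              obtain ⟨hnB, hins⟩ := mem_res1.mp hB
              have := hTG _ hins
              rwa [insert_inter_Icc hNw] at this)
            (fun A hA B hB => by
              obtain ⟨hnA, hinsA⟩ := mem_res1.mp hA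
              obtain ⟨hnB, hinsB⟩ := mem_res1.mp hB
              obtain ⟨x, hx⟩ := window_lemma hsF hF hG hcross hinsA hinsB
              rw [mem_inter, mem_inter] at hx
              obtain ⟨⟨hxA, hxB⟩, hxIcc⟩ := hx
              simp only [mem_Icc] at hxIcc
              have hxN : x ≠ N := by omega
              refine ⟨x, mem_inter.mpr ⟨?_, ?_⟩⟩
              · rcases mem_insert.mp hxA with rfl | h
                · omega
                · exact h
              · rcases mem_insert.mp hxB with rfl | h
                · omega
                · exact h)
            (shifted_res1 hF hsF) (shifted_res1 hG hsG)
          have hpas := Tset_pascal hNw (by omega : 1 ≤ k)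
          omega

theorem mainthm (n : ℕ) : ∀ (k l : ℕ) (F G : Finset (Finset ℕ)),
    1 ≤ l → l ≤ k → k + l ≤ n →
    F ⊆ powersetCard k (Icc 1 n) → G ⊆ powersetCard l (Icc 1 n) →
    (∀ A ∈ F, ∀ B ∈ G, (A ∩ B).Nonempty) →
    (∀ B ∈ G, ∀ B' ∈ G, (B ∩ B').Nonempty) →
    Shifted F → Shifted G → powersetCard l (Icc 1 (l+1)) ⊆ G →
    F.card + G.card ≤ (l + 1) + (Tset n k (l+1)).card := by
  induction n using Nat.strong_induction_on with
  | _ n ih =>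
    intro k l F G hl hlk hn hF hG hcross hGint hsF hsG hD
    -- l ≥ 2, since {1} and {2} would be disjoint members of G otherwise
    have hl2 : 2 ≤ l := by
      by_contra hc
      have hleq : l = 1 := by omega
      subst hleq
      have h1 : ({1} : Finset ℕ) ∈ G := hD (by
        rw [mem_powersetCard]
        constructor
        · intro x hx
          rw [mem_singleton] at hx
          subst hx
          simp only [mem_Icc]; omega
        · exact card_singleton 1)
      have h2 : ({2} : Finset ℕ) ∈ G := hD (by
        rw [mem_powersetCard]
        constructor
        · intro x hx
          rw [mem_singleton] at hx
          subst hx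
          simp only [mem_Icc]; omega
        · exact card_singleton 2)
      obtain ⟨x, hx⟩ := hGint _ h1 _ h2
      rw [mem_inter, mem_singleton, mem_singleton] at hx
      omega
    have hTG : ∀ B ∈ G, 2 ≤ (B ∩ Icc 1 (l+1)).card :=
      fun B hB => trace_two hl hD (fun B' hB' => hGint B hB B' hB')
    have hTF : ∀ A ∈ F, 2 ≤ (A ∩ Icc 1 (l+1)).card :=
      fun A hA => trace_two hl hD (hcross A hA)
    have hFT : F ⊆ Tset n k (l+1) := by
      intro A hA
      obtain ⟨h1, h2⟩ := mem_powersetCard.mp (hF hA)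
      exact mem_Tset.mpr ⟨h1, h2, hTF A hA⟩
    have hDcard : (powersetCard l (Icc 1 (l+1))).card = l + 1 := by
      rw [card_powersetCard, Nat.card_Icc]
      have : l + 1 + 1 - 1 = l + 1 := by omega
      rw [this, Nat.choose_succ_self_right]
    by_cases hnkl : n ≤ k + l
    · -- base case n = k + l
      have hNeq : n = k + l := le_antisymm hnkl hn
      have himg : ∀ B ∈ G \ powersetCard l (Icc 1 (l+1)), Icc 1 n \ B ∈ Tset n k (l+1) \ F := by
        intro B hB
        rw [mem_sdiff] at hB
        obtain ⟨hBG, hBD⟩ := hB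
        obtain ⟨hBsub, hBcard⟩ := mem_powersetCard.mp (hG hBG)
        have hBtr : (B ∩ Icc 1 (l+1)).card ≤ l - 1 := by
          by_contra hc
          push_neg at hc
          have h1 : (B ∩ Icc 1 (l+1)).card ≤ l := hBcard ▸ card_le_card inter_subset_left
          have h2 : (B ∩ Icc 1 (l+1)).card = l := by omega
          have h3 : B ∩ Icc 1 (l+1) = B :=
            eq_of_subset_of_card_le inter_subset_left (by omega)
          apply hBD
          rw [mem_powersetCard]
          refine ⟨?_, hBcard⟩
          intro x hx
          rw [← h3] at hx
          exact (mem_inter.mp hx).2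
        rw [mem_sdiff, mem_Tset]
        refine ⟨⟨sdiff_subset, ?_, ?_⟩, ?_⟩
        · rw [card_sdiff_of_subset hBsub, Nat.card_Icc, hBcard]
          omega
        · have hkey : Icc 1 (l+1) \ (B ∩ Icc 1 (l+1)) ⊆ (Icc 1 n \ B) ∩ Icc 1 (l+1) := by
            intro x hx
            rw [mem_sdiff] at hx
            obtain ⟨hx1, hx2⟩ := hx
            have hxB : x ∉ B := fun hc => hx2 (mem_inter.mpr ⟨hc, hx1⟩)
            simp only [mem_Icc] at hx1
            refine mem_inter.mpr ⟨mem_sdiff.mpr ⟨?_, hxB⟩, ?_⟩ <;>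
              simp only [mem_Icc] <;> omega
          have hle := card_le_card hkey
          have hcs : (Icc 1 (l+1) \ (B ∩ Icc 1 (l+1))).card
              = (l+1) - (B ∩ Icc 1 (l+1)).card := by
            rw [card_sdiff_of_subset inter_subset_right, Nat.card_Icc]
            omega
          omega
        · intro hmem
          obtain ⟨x, hx⟩ := hcross _ hmem B hBG
          rw [mem_inter, mem_sdiff] at hx
          exact hx.1.2 hx.2
      have hinj : Set.InjOn (fun B => Icc 1 n \ B)
          ((G \ powersetCard l (Icc 1 (l+1)) : Finset (Finset ℕ)) : Set (Finset ℕ)) := by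
        intro B hB C hC h
        have hB' := mem_sdiff.mp (mem_coe.mp hB)
        have hC' := mem_sdiff.mp (mem_coe.mp hC)
        have hBsub := (mem_powersetCard.mp (hG hB'.1)).1
        have hCsub := (mem_powersetCard.mp (hG hC'.1)).1
        dsimp only at h
        have h1 : Icc 1 n \ (Icc 1 n \ B) = Icc 1 n \ (Icc 1 n \ C) := by rw [h]
        rwa [sdiff_sdiff_right_self, sdiff_sdiff_right_self,
          inf_eq_right.mpr hBsub, inf_eq_right.mpr hCsub] at h1
      have hcard : (G \ powersetCard l (Icc 1 (l+1))).card ≤ (Tset n k (l+1) \ F).card := by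
        rw [← card_image_of_injOn hinj]
        apply card_le_card
        intro A hA
        obtain ⟨B, hB, rfl⟩ := mem_image.mp hA
        exact himg B hB
      have h1 := card_sdiff_of_subset hFT
      have h2 := card_le_card hFT
      have h3 := card_sdiff_of_subset hD
      have h4 := card_le_card hD
      omega
    · push_neg at hnkl
      have hn1 : 1 ≤ n := by omega
      have hwn : l + 1 < n := by omega
      have e1 := card_res F n
      have e2 := card_res G n
      have hD0 : powersetCard l (Icc 1 (l+1)) ⊆ res0 G n := by
        intro D hDmem
        rw [mem_res0]
        refine ⟨hD hDmem, fun hc => ?_⟩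
        have := (mem_powersetCard.mp hDmem).1 hc
        simp only [mem_Icc] at this
        omega
      have IH := ih (n-1) (by omega) k l (res0 F n) (res0 G n) hl hlk (by omega)
        (res0_subset hF) (res0_subset hG)
        (fun A hA B hB => hcross A (mem_res0.mp hA).1 B (mem_res0.mp hB).1)
        (fun B hB B' hB' => hGint B (mem_res0.mp hB).1 B' (mem_res0.mp hB').1)
        (shifted_res0 hF hsF) (shifted_res0 hG hsG) hD0
      have SUB := subthm (n-1) (k-1) (l-1) (l+1) (res1 F n) (res1 G n)
        (by omega) (by omega) (by omega)
        (res1_subset hF) (res1_subset hG)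
        (fun A hA => by
          obtain ⟨hnA, hins⟩ := mem_res1.mp hA
          have := hTF _ hins
          rwa [insert_inter_Icc hwn] at this)
        (fun B hB => by
          obtain ⟨hnB, hins⟩ := mem_res1.mp hB
          have := hTG _ hins
          rwa [insert_inter_Icc hwn] at this)
        (fun A hA B hB => by
          obtain ⟨hnA, hinsA⟩ := mem_res1.mp hA
          obtain ⟨hnB, hinsB⟩ := mem_res1.mp hB
          obtain ⟨x, hx⟩ := window_lemma hsF hF hG hcross hinsA hinsB
          rw [mem_inter, mem_inter] at hx
          obtain ⟨⟨hxA, hxB⟩, hxIcc⟩ := hx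
          simp only [mem_Icc] at hxIcc
          refine ⟨x, mem_inter.mpr ⟨?_, ?_⟩⟩
          · rcases mem_insert.mp hxA with rfl | h
            · omega
            · exact h
          · rcases mem_insert.mp hxB with rfl | h
            · omega
            · exact h)
        (shifted_res1 hF hsF) (shifted_res1 hG hsG)
      have hpas := Tset_pascal hwn (by omega : 1 ≤ k)
      omega

theorem cross_intersecting_shifted_nontrivial_bound
    (k l n : ℕ) (hl : 1 ≤ l) (hlk : l ≤ k) (hn : k + l ≤ n)
    (F G : Finset (Finset ℕ))
    (hF : F ⊆ powersetCard k (Icc 1 n))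
    (hG : G ⊆ powersetCard l (Icc 1 n))
    (hcross : ∀ A ∈ F, ∀ B ∈ G, (A ∩ B).Nonempty)
    (hGint : ∀ B ∈ G, ∀ B' ∈ G, (B ∩ B').Nonempty)
    (hshift : ∀ B ∈ G, ∀ i j : ℕ, 1 ≤ i → i < j → i ∉ B → j ∈ B →
      insert i (B.erase j) ∈ G)
    (hnontriv : ¬ ∃ x ∈ Icc 1 n, ∀ B ∈ G, x ∈ B) :
    F.card + G.card ≤
      l + 1 + Nat.choose n k - Nat.choose (n - l - 1) k
        - (l + 1) * Nat.choose (n - l - 1) (k - 1) := by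
  have hn1 : 1 ≤ n := by omega
  have hsG : Shifted G := hshift
  push_neg at hnontriv
  have hex : ∃ B ∈ G, 1 ∉ B := hnontriv 1 (by simp only [mem_Icc]; omega)
  have hD : powersetCard l (Icc 1 (l+1)) ⊆ G := Dfam_sub hG hsG (by omega) hex
  set F' := (powersetCard k (Icc 1 n)).filter (fun A => ∀ B ∈ G, (A ∩ B).Nonempty) with hF'
  have hFF' : F ⊆ F' := by
    intro A hA
    rw [hF', mem_filter]
    exact ⟨hF hA, hcross A hA⟩
  have hsF' : Shifted F' := maxF_shifted hsG
  have hcross' : ∀ A ∈ F', ∀ B ∈ G, (A ∩ B).Nonempty := by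
    intro A hA B hB
    rw [hF', mem_filter] at hA
    exact hA.2 B hB
  have hmain := mainthm n k l F' G hl hlk hn (filter_subset _ _) hG hcross' hGint hsF' hsG hD
  have hcount := Tset_count (show l + 1 ≤ n by omega) (show 1 ≤ k by omega)
  have hle := card_le_card hFF'
  omega
end

section
/- Let t, s, k, n, m be integers with t ≥ 0, s ≥ 0, k ≥ s+1, n ≥ 2k+t and m > k+t+s. Let ℱ ⊆ {A ∈ C([n], k+t) : |A ∩ [m]| ≥ t+s+1} and 𝒢 ⊆ {B ∈ C([n], k) : |B ∩ [m]| ≥ s+1} be cross-intersecting families. If ℱ is t-intersecting, then |ℱ| + |𝒢| ≤ C(n, k) − Σ_{i=0}^{s} C(m, i)·C(n−m, k−i). -/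
open Finset

namespace RUB

def tau (i j : ℕ) (A : Finset ℕ) : Finset ℕ :=
  if j ∈ A ∧ i ∉ A then insert i (A.erase j) else A

def comp (i j : ℕ) (F : Finset (Finset ℕ)) : Finset (Finset ℕ) :=
  F.filter (fun A => tau i j A ∈ F) ∪ (F.filter (fun A => tau i j A ∉ F)).image (tau i j)

def wt (A : Finset ℕ) : ℕ := 1 + ∑ x ∈ A, x

def mu (F : Finset (Finset ℕ)) : ℕ := ∑ A ∈ F, wt A

def Uni (n m k s : ℕ) : Finset (Finset ℕ) :=
  (powersetCard k (Icc 1 n)).filter (fun B => s + 1 ≤ (B ∩ Icc 1 m).card)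

variable {i j t s k n m : ℕ} {A A' B B' S : Finset ℕ} {F G : Finset (Finset ℕ)}

lemma tau_of_trigger (h1 : j ∈ A) (h2 : i ∉ A) : tau i j A = insert i (A.erase j) := by
  simp [tau, h1, h2]

lemma tau_eq_self (h : ¬(j ∈ A ∧ i ∉ A)) : tau i j A = A := by
  simp only [tau, if_neg h]

lemma card_insert_erase (hj : j ∈ S) (hi : i ∉ S) :
    (insert i (S.erase j)).card = S.card := by
  rw [card_insert_of_notMem (by simp [mem_erase, hi]), card_erase_add_one hj]

lemma tau_card : (tau i j A).card = A.card := by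
  unfold tau; split
  · next h => exact card_insert_erase h.1 h.2
  · rfl

lemma tau_subset (hA : A ⊆ Icc 1 n) (hi1 : 1 ≤ i) (hin : i ≤ n) : tau i j A ⊆ Icc 1 n := by
  unfold tau; split
  · exact insert_subset (by simp [hi1, hin]) ((erase_subset _ _).trans hA)
  · exact hA

lemma trigger_of_ne (h : tau i j A ≠ A) : j ∈ A ∧ i ∉ A := by
  by_contra h'
  exact h (tau_eq_self h')

lemma inter_ii (hiA : i ∈ A) (hi' : i ∉ A') :
    A ∩ insert i (A'.erase j) = insert i ((A ∩ A').erase j) := by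
  ext x
  simp only [mem_inter, mem_insert, mem_erase]
  constructor
  · rintro ⟨hxA, (rfl | ⟨hxj, hxA'⟩)⟩
    · exact Or.inl rfl
    · exact Or.inr ⟨hxj, hxA, hxA'⟩
  · rintro (rfl | ⟨hxj, hxA, hxA'⟩)
    · exact ⟨hiA, Or.inl rfl⟩
    · exact ⟨hxA, Or.inr ⟨hxj, hxA'⟩⟩

lemma inter_swap (hiA : i ∉ A) (hi' : i ∉ A') :
    A ∩ insert i (A'.erase j) = (insert i (A.erase j)) ∩ A' := by
  ext x
  simp only [mem_inter, mem_insert, mem_erase]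
  constructor
  · rintro ⟨hxA, (rfl | ⟨hxj, hxA'⟩)⟩
    · exact absurd hxA hiA
    · exact ⟨Or.inr ⟨hxj, hxA⟩, hxA'⟩
  · rintro ⟨(rfl | ⟨hxj, hxA⟩), hxA'⟩
    · exact absurd hxA' hi'
    · exact ⟨hxA, Or.inr ⟨hxj, hxA'⟩⟩

lemma inter_mm :
    (insert i (A.erase j)) ∩ (insert i (A'.erase j)) = insert i ((A ∩ A').erase j) := by
  ext x
  simp only [mem_inter, mem_insert, mem_erase]
  tauto

lemma inter_subset_of_not_mem (hjA : j ∉ A) :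
    A ∩ A' ⊆ A ∩ insert i (A'.erase j) := by
  intro x hx
  simp only [mem_inter, mem_insert, mem_erase] at *
  exact ⟨hx.1, Or.inr ⟨fun h => hjA (h ▸ hx.1), hx.2⟩⟩

lemma inter_Icc_of_le (hi1 : 1 ≤ i) (hijm : i < j) (hjm : j ≤ m) (hiA : i ∉ A) :
    (insert i (A.erase j)) ∩ Icc 1 m = insert i ((A ∩ Icc 1 m).erase j) := by
  ext x
  simp only [mem_inter, mem_insert, mem_erase, mem_Icc]
  constructor
  · rintro ⟨(rfl | ⟨hxj, hxA⟩), hx⟩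
    · exact Or.inl rfl
    · exact Or.inr ⟨hxj, hxA, hx⟩
  · rintro (rfl | ⟨hxj, hxA, hx⟩)
    · exact ⟨Or.inl rfl, hi1, le_trans (le_of_lt hijm) hjm⟩
    · exact ⟨Or.inr ⟨hxj, hxA⟩, hx⟩

lemma inter_Icc_subset_of_gt (hjm : m < j) :
    A ∩ Icc 1 m ⊆ (insert i (A.erase j)) ∩ Icc 1 m := by
  intro x hx
  simp only [mem_inter, mem_insert, mem_erase, mem_Icc] at *
  exact ⟨Or.inr ⟨fun h => absurd (h ▸ hx.2.2) (not_le.mpr hjm), hx.1⟩, hx.2⟩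

lemma tau_inter_Icc_card (hi1 : 1 ≤ i) (hij : i < j) :
    (A ∩ Icc 1 m).card ≤ (tau i j A ∩ Icc 1 m).card := by
  unfold tau; split
  · next h =>
    rcases le_or_gt j m with hjm | hjm
    · rw [inter_Icc_of_le hi1 hij hjm h.2,
        card_insert_erase (by simp [mem_inter, h.1, mem_Icc]; omega)
          (by simp [mem_inter, h.2])]
    · exact card_le_card (inter_Icc_subset_of_gt hjm)
  · exact le_refl _

-- membership in comp
lemma mem_comp :
    B ∈ comp i j F ↔ (B ∈ F ∧ tau i j B ∈ F) ∨ ∃ A ∈ F, tau i j A ∉ F ∧ B = tau i j A := by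
  simp only [comp, mem_union, mem_filter, mem_image]
  constructor
  · rintro (h | ⟨A, hA, rfl⟩)
    · exact Or.inl h
    · exact Or.inr ⟨A, hA.1, hA.2, rfl⟩
  · rintro (h | ⟨A, hA, hA2, rfl⟩)
    · exact Or.inl h
    · exact Or.inr ⟨A, ⟨hA, hA2⟩, rfl⟩

lemma tau_mem_of_mem_comp (h : B ∈ comp i j F) (hB : B ∈ F) : tau i j B ∈ F := by
  rcases mem_comp.mp h with h' | ⟨A, hA, hA2, rfl⟩
  · exact h'.2
  · exact absurd hB hA2

lemma comp_eq_self_imp (h : comp i j F = F) (hA : A ∈ F) : tau i j A ∈ F :=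
  tau_mem_of_mem_comp (by rw [h]; exact hA) hA

lemma tau_injOn :
    Set.InjOn (tau i j) (F.filter (fun A => tau i j A ∉ F)) := by
  intro A hA A' hA' h
  simp only [coe_filter, Set.mem_setOf_eq, mem_coe, mem_filter] at hA hA'
  have tA := trigger_of_ne (fun he => hA.2 (he ▸ hA.1))
  have tA' := trigger_of_ne (fun he => hA'.2 (he ▸ hA'.1))
  rw [tau_of_trigger tA.1 tA.2, tau_of_trigger tA'.1 tA'.2] at h
  have := congrArg (fun S => insert j (S.erase i)) h
  simpa [erase_insert (by simp [mem_erase, tA.2] : i ∉ A.erase j),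
    erase_insert (by simp [mem_erase, tA'.2] : i ∉ A'.erase j),
    insert_erase tA.1, insert_erase tA'.1] using this

lemma comp_disj :
    Disjoint (F.filter (fun A => tau i j A ∈ F))
      ((F.filter (fun A => tau i j A ∉ F)).image (tau i j)) := by
  rw [disjoint_left]
  intro B hB hB'
  simp only [mem_filter, mem_image] at hB hB'
  obtain ⟨A, hA, rfl⟩ := hB'
  exact hA.2 hB.1

lemma card_comp : (comp i j F).card = F.card := by
  rw [comp, card_union_of_disjoint comp_disj, card_image_of_injOn tau_injOn,
    card_filter_add_card_filter_not]

lemma mu_comp_le (hij : i < j) : mu (comp i j F) ≤ mu F := by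
  rw [mu, comp, sum_union comp_disj, sum_image tau_injOn]
  have h1 : ∀ A ∈ F.filter (fun A => tau i j A ∉ F), wt (tau i j A) ≤ wt A := by
    intro A hA
    unfold tau wt
    split
    · next h =>
      rw [sum_insert (by simp [mem_erase, h.2])]
      have h2 : ∑ x ∈ A.erase j, x + j = ∑ x ∈ A, x := Finset.sum_erase_add A _ h.1
      omega
    · exact le_refl _
  calc ∑ A ∈ F.filter (fun A => tau i j A ∈ F), wt A
        + ∑ A ∈ F.filter (fun A => tau i j A ∉ F), wt (tau i j A)
      ≤ ∑ A ∈ F.filter (fun A => tau i j A ∈ F), wt A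
        + ∑ A ∈ F.filter (fun A => tau i j A ∉ F), wt A := by
        exact Nat.add_le_add_left (Finset.sum_le_sum h1) _
    _ = mu F := by rw [mu, sum_filter_add_sum_filter_not F _ wt]

lemma mu_comp_lt (hij : i < j) (hne : comp i j F ≠ F) : mu (comp i j F) < mu F := by
  have hmoved : (F.filter (fun A => tau i j A ∉ F)).Nonempty := by
    by_contra h
    rw [not_nonempty_iff_eq_empty, filter_eq_empty_iff] at h
    apply hne
    rw [comp, filter_eq_self.mpr (fun A hA => not_not.mp (h hA))]
    simp [filter_eq_empty_iff.mpr h]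
  rw [mu, comp, sum_union comp_disj, sum_image tau_injOn]
  have h1 : ∀ A ∈ F.filter (fun A => tau i j A ∉ F), wt (tau i j A) < wt A := by
    intro A hA
    simp only [mem_filter] at hA
    have tA := trigger_of_ne (fun he => hA.2 (he ▸ hA.1))
    rw [tau_of_trigger tA.1 tA.2]
    unfold wt
    rw [sum_insert (by simp [mem_erase, tA.2])]
    have h2 : ∑ x ∈ A.erase j, x + j = ∑ x ∈ A, x := Finset.sum_erase_add A _ tA.1
    omega
  calc ∑ A ∈ F.filter (fun A => tau i j A ∈ F), wt A
        + ∑ A ∈ F.filter (fun A => tau i j A ∉ F), wt (tau i j A)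
      < ∑ A ∈ F.filter (fun A => tau i j A ∈ F), wt A
        + ∑ A ∈ F.filter (fun A => tau i j A ∉ F), wt A := by
        exact Nat.add_lt_add_left (Finset.sum_lt_sum_of_nonempty hmoved h1) _
    _ = mu F := by rw [mu, sum_filter_add_sum_filter_not F _ wt]

lemma card_le_mu : F.card ≤ mu F := by
  rw [mu]
  calc F.card = ∑ _A ∈ F, 1 := by rw [sum_const, smul_eq_mul, mul_one]
    _ ≤ ∑ A ∈ F, wt A := Finset.sum_le_sum (fun A _ => by unfold wt; omega)


lemma tint_aux (hint : ∀ A ∈ F, ∀ A' ∈ F, t ≤ (A ∩ A').card)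
    (hA : A ∈ F) (hA2 : tau i j A ∈ F) (hA0 : A' ∈ F) (hA0' : tau i j A' ∉ F) :
    t ≤ (A ∩ tau i j A').card := by
  have tA' := trigger_of_ne (fun he => hA0' (he ▸ hA0))
  rw [tau_of_trigger tA'.1 tA'.2]
  by_cases hjA : j ∈ A
  · by_cases hiA : i ∈ A
    · rw [inter_ii hiA tA'.2,
        card_insert_erase (by simp [mem_inter, hjA, tA'.1]) (by simp [mem_inter, tA'.2])]
      exact hint A hA A' hA0
    · rw [inter_swap hiA tA'.2]
      have h := hint _ hA2 _ hA0
      rwa [tau_of_trigger hjA hiA] at h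
  · exact le_trans (hint A hA A' hA0) (card_le_card (inter_subset_of_not_mem hjA))

lemma tint_comp (hint : ∀ A ∈ F, ∀ A' ∈ F, t ≤ (A ∩ A').card) :
    ∀ B ∈ comp i j F, ∀ B' ∈ comp i j F, t ≤ (B ∩ B').card := by
  intro B hB B' hB'
  rcases mem_comp.mp hB with ⟨h1, h2⟩ | ⟨A, hA, hA2, rfl⟩
  · rcases mem_comp.mp hB' with ⟨h1', h2'⟩ | ⟨A', hA', hA2', rfl⟩
    · exact hint _ h1 _ h1'
    · exact tint_aux hint h1 h2 hA' hA2'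
  · rcases mem_comp.mp hB' with ⟨h1', h2'⟩ | ⟨A', hA', hA2', rfl⟩
    · rw [inter_comm]
      exact tint_aux hint h1' h2' hA hA2
    · have tA := trigger_of_ne (fun he => hA2 (he ▸ hA))
      have tA' := trigger_of_ne (fun he => hA2' (he ▸ hA'))
      rw [tau_of_trigger tA.1 tA.2, tau_of_trigger tA'.1 tA'.2, inter_mm,
        card_insert_erase (by simp [mem_inter, tA.1, tA'.1]) (by simp [mem_inter, tA.2])]
      exact hint _ hA _ hA'

lemma cross_aux (hcross : ∀ A ∈ F, ∀ B ∈ G, (A ∩ B).Nonempty)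
    (hA : A ∈ F) (hA2 : tau i j A ∈ F) (hB : B ∈ G) (hB' : tau i j B ∉ G) :
    (A ∩ tau i j B).Nonempty := by
  have tB := trigger_of_ne (fun he => hB' (he ▸ hB))
  rw [tau_of_trigger tB.1 tB.2]
  obtain ⟨x, hx⟩ := hcross A hA B hB
  rw [mem_inter] at hx
  by_cases hxj : x = j
  · subst hxj
    by_cases hiA : i ∈ A
    · exact ⟨i, by simp [mem_inter, hiA]⟩
    · rw [tau_of_trigger hx.1 hiA] at hA2
      obtain ⟨y, hy⟩ := hcross _ hA2 B hB
      rw [mem_inter, mem_insert, mem_erase] at hy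
      rcases hy.1 with rfl | ⟨hyj, hyA⟩
      · exact absurd hy.2 tB.2
      · exact ⟨y, by simp only [mem_inter, mem_insert, mem_erase]; exact ⟨hyA, Or.inr ⟨hyj, hy.2⟩⟩⟩
  · exact ⟨x, by simp only [mem_inter, mem_insert, mem_erase]; exact ⟨hx.1, Or.inr ⟨hxj, hx.2⟩⟩⟩

lemma cross_comp (hcross : ∀ A ∈ F, ∀ B ∈ G, (A ∩ B).Nonempty) :
    ∀ A ∈ comp i j F, ∀ B ∈ comp i j G, (A ∩ B).Nonempty := by
  have hcross' : ∀ B ∈ G, ∀ A ∈ F, (B ∩ A).Nonempty := by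
    intro B hB A hA
    rw [inter_comm]
    exact hcross A hA B hB
  intro Ax hAx Bx hBx
  rcases mem_comp.mp hAx with ⟨h1, h2⟩ | ⟨A, hA, hA2, rfl⟩
  · rcases mem_comp.mp hBx with ⟨h1', h2'⟩ | ⟨B, hB, hB2, rfl⟩
    · exact hcross _ h1 _ h1'
    · exact cross_aux hcross h1 h2 hB hB2
  · rcases mem_comp.mp hBx with ⟨h1', h2'⟩ | ⟨B, hB, hB2, rfl⟩
    · rw [inter_comm]
      exact cross_aux hcross' h1' h2' hA hA2
    · have tA := trigger_of_ne (fun he => hA2 (he ▸ hA))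
      have tB := trigger_of_ne (fun he => hB2 (he ▸ hB))
      rw [tau_of_trigger tA.1 tA.2, tau_of_trigger tB.1 tB.2]
      obtain ⟨x, hx⟩ := hcross A hA B hB
      rw [mem_inter] at hx
      by_cases hxj : x = j
      · exact ⟨i, by simp [mem_inter]⟩
      · refine ⟨x, ?_⟩
        simp only [mem_inter, mem_insert, mem_erase]
        exact ⟨Or.inr ⟨hxj, hx.1⟩, Or.inr ⟨hxj, hx.2⟩⟩


lemma uni_mono (hn' : n' ≤ n) : Uni n' m k s ⊆ Uni n m k s := by
  intro B hB
  simp only [Uni, mem_filter, mem_powersetCard] at *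
  exact ⟨⟨hB.1.1.trans (Icc_subset_Icc_right hn'), hB.1.2⟩, hB.2⟩

lemma card_split (hn1 : 1 ≤ n) (hk1 : 1 ≤ k) (V : Finset (Finset ℕ))
    (hV : ∀ B ∈ V, B ⊆ Icc 1 (n-1) ∧ B.card = k - 1)
    (hV2 : ∀ B ∈ V, s + 1 ≤ ((insert n B) ∩ Icc 1 m).card) :
    (Uni (n-1) m k s).card + V.card ≤ (Uni n m k s).card := by
  have hnB : ∀ B ∈ V, n ∉ B := by
    intro B hB hnB
    have := (hV B hB).1 hnB
    rw [mem_Icc] at this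
    omega
  have hinj : Set.InjOn (insert n) (V : Set (Finset ℕ)) := by
    intro B hB B' hB' h
    have := congrArg (Finset.erase · n) h
    simpa [erase_insert (hnB B hB), erase_insert (hnB B' hB')] using this
  have himg : V.image (insert n) ⊆ Uni n m k s := by
    intro B hB
    obtain ⟨B₀, hB₀, rfl⟩ := mem_image.mp hB
    simp only [Uni, mem_filter, mem_powersetCard]
    refine ⟨⟨?_, ?_⟩, hV2 B₀ hB₀⟩
    · exact insert_subset (by simp [mem_Icc]; omega)
        (((hV B₀ hB₀).1).trans (Icc_subset_Icc_right (by omega)))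
    · rw [card_insert_of_notMem (hnB B₀ hB₀), (hV B₀ hB₀).2]
      omega
  have hdisj : Disjoint (Uni (n-1) m k s) (V.image (insert n)) := by
    rw [disjoint_left]
    intro B hB hB'
    obtain ⟨B₀, hB₀, rfl⟩ := mem_image.mp hB'
    simp only [Uni, mem_filter, mem_powersetCard] at hB
    have := hB.1.1 (mem_insert_self n B₀)
    rw [mem_Icc] at this
    omega
  calc (Uni (n-1) m k s).card + V.card
      = (Uni (n-1) m k s).card + (V.image (insert n)).card := by
        rw [card_image_of_injOn hinj]
    _ = ((Uni (n-1) m k s) ∪ V.image (insert n)).card := (card_union_of_disjoint hdisj).symm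
    _ ≤ (Uni n m k s).card := card_le_card
        (union_subset (uni_mono (by omega)) himg)

lemma fiber_card (hmn : m ≤ n) (hik : i ≤ k) :
    ((powersetCard k (Icc 1 n)).filter (fun B => (B ∩ Icc 1 m).card = i)).card
      = m.choose i * (n - m).choose (k - i) := by
  have key : ∀ B : Finset ℕ, B ⊆ Icc 1 n → (B ∩ Icc 1 m) ∪ (B ∩ Icc (m+1) n) = B := by
    intro B hB
    ext x
    simp only [mem_union, mem_inter, mem_Icc]
    constructor
    · rintro (⟨h, _⟩ | ⟨h, _⟩) <;> exact h
    · intro hx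
      have := hB hx
      rw [mem_Icc] at this
      by_cases hxm : x ≤ m
      · exact Or.inl ⟨hx, this.1, hxm⟩
      · exact Or.inr ⟨hx, by omega⟩
  have hdisj : ∀ (C D : Finset ℕ), C ⊆ Icc 1 m → D ⊆ Icc (m+1) n → Disjoint C D := by
    intro C D hC hD
    rw [disjoint_left]
    intro a haC haD
    have h1 := hC haC; have h2 := hD haD
    rw [mem_Icc] at h1 h2
    omega
  rw [show m.choose i * (n - m).choose (k - i)
      = ((powersetCard i (Icc 1 m)) ×ˢ (powersetCard (k - i) (Icc (m+1) n))).card by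
    rw [card_product, card_powersetCard, card_powersetCard, Nat.card_Icc, Nat.card_Icc]
    congr 2 <;> omega]
  apply Finset.card_bij' (fun B _ => (B ∩ Icc 1 m, B ∩ Icc (m+1) n))
    (fun p _ => p.1 ∪ p.2)
  · intro B hB
    simp only [mem_filter, mem_powersetCard] at hB
    simp only [mem_product, mem_powersetCard]
    have hcard : (B ∩ Icc 1 m).card + (B ∩ Icc (m+1) n).card = k := by
      rw [← card_union_of_disjoint (hdisj _ _ inter_subset_right inter_subset_right),
        key B hB.1.1, hB.1.2]
    refine ⟨⟨inter_subset_right, hB.2⟩, ⟨inter_subset_right, by omega⟩⟩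
  · intro p hp
    simp only [mem_product, mem_powersetCard] at hp
    simp only [mem_filter, mem_powersetCard]
    have hd := hdisj _ _ hp.1.1 hp.2.1
    have h1 : (p.1 ∪ p.2) ∩ Icc 1 m = p.1 := by
      ext x
      simp only [mem_inter, mem_union, mem_Icc]
      constructor
      · rintro ⟨(h | h), hx⟩
        · exact h
        · have := hp.2.1 h; rw [mem_Icc] at this; omega
      · intro h
        have := hp.1.1 h; rw [mem_Icc] at this
        exact ⟨Or.inl h, this⟩
    refine ⟨⟨union_subset (hp.1.1.trans (Icc_subset_Icc_right hmn))
      (hp.2.1.trans (Icc_subset_Icc_left (by omega))), ?_⟩, by rw [h1, hp.1.2]⟩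
    rw [card_union_of_disjoint hd, hp.1.2, hp.2.2]
    omega
  · intro B hB
    simp only [mem_filter, mem_powersetCard] at hB
    exact key B hB.1.1
  · intro p hp
    simp only [mem_product, mem_powersetCard] at hp
    have hd := hdisj _ _ hp.1.1 hp.2.1
    have h1 : (p.1 ∪ p.2) ∩ Icc 1 m = p.1 := by
      ext x
      simp only [mem_inter, mem_union, mem_Icc]
      constructor
      · rintro ⟨(h | h), hx⟩
        · exact h
        · have := hp.2.1 h; rw [mem_Icc] at this; omega
      · intro h
        have := hp.1.1 h; rw [mem_Icc] at this
        exact ⟨Or.inl h, this⟩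
    have h2 : (p.1 ∪ p.2) ∩ Icc (m+1) n = p.2 := by
      ext x
      simp only [mem_inter, mem_union, mem_Icc]
      constructor
      · rintro ⟨(h | h), hx⟩
        · have := hp.1.1 h; rw [mem_Icc] at this; omega
        · exact h
      · intro h
        have := hp.2.1 h; rw [mem_Icc] at this
        exact ⟨Or.inr h, this⟩
    rw [h1, h2]

lemma uni_card (hk : s + 1 ≤ k) :
    (Uni n m k s).card
      = n.choose k - ∑ i ∈ range (s + 1), m.choose i * (n - m).choose (k - i) := by
  have hP : (powersetCard k (Icc 1 n)).card = n.choose k := by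
    rw [card_powersetCard, Nat.card_Icc]
    norm_num
  rcases le_or_gt m n with hmn | hmn
  · have h2 := card_filter_add_card_filter_not
      (s := powersetCard k (Icc 1 n)) (p := fun B => s + 1 ≤ (B ∩ Icc 1 m).card)
    have h3 : ((powersetCard k (Icc 1 n)).filter
        (fun B => ¬ (s + 1 ≤ (B ∩ Icc 1 m).card))).card
        = ∑ i ∈ range (s + 1), m.choose i * (n - m).choose (k - i) := by
      rw [Finset.card_eq_sum_card_fiberwise
        (f := fun B => (B ∩ Icc 1 m).card) (t := range (s + 1))
        (fun B hB => by simp only [mem_coe, mem_filter] at hB; simp only [mem_coe, mem_range]; omega)]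
      apply Finset.sum_congr rfl
      intro i hi
      rw [mem_range] at hi
      rw [← fiber_card hmn (by omega)]
      congr 1
      ext B
      simp only [mem_filter]
      constructor
      · rintro ⟨⟨h1, _⟩, h3⟩
        exact ⟨h1, h3⟩
      · rintro ⟨h1, h3⟩
        refine ⟨⟨h1, by omega⟩, h3⟩
    rw [Uni]
    omega
  · have hUeq : Uni n m k s = powersetCard k (Icc 1 n) := by
      rw [Uni, filter_true_of_mem]
      intro B hB
      rw [mem_powersetCard] at hB
      have : B ∩ Icc 1 m = B := by
        rw [inter_eq_left]
        exact hB.1.trans (Icc_subset_Icc_right (by omega))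
      rw [this, hB.2]
      omega
    have hz : ∑ i ∈ range (s + 1), m.choose i * (n - m).choose (k - i) = 0 := by
      apply Finset.sum_eq_zero
      intro i hi
      rw [mem_range] at hi
      have hz0 : (n - m).choose (k - i) = 0 := by
        rw [show n - m = 0 by omega]
        exact Nat.choose_eq_zero_of_lt (by omega)
      rw [hz0, mul_zero]
    rw [hUeq, hP, hz]
    omega


lemma erase_inter_insert (hxA : x ∉ A) (hnA : n ∈ A) (hxn : x ≠ n) :
    A ∩ insert x (A'.erase n) = (A ∩ A').erase n := by
  ext y
  simp only [mem_inter, mem_insert, mem_erase]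
  constructor
  · rintro ⟨hyA, (rfl | ⟨hyn, hyA'⟩)⟩
    · exact absurd hyA hxA
    · exact ⟨hyn, hyA, hyA'⟩
  · rintro ⟨hyn, hyA, hyA'⟩
    exact ⟨hyA, Or.inr ⟨hyn, hyA'⟩⟩

lemma free_elem (W : Finset ℕ) (hW : W.card + 1 ≤ n - 1) :
    ∃ x, 1 ≤ x ∧ x ≤ n - 1 ∧ x ∉ W := by
  have h1 : (Icc 1 (n-1) \ W).Nonempty := by
    rw [← card_pos]
    have h2 := Finset.le_card_sdiff W (Icc 1 (n-1))
    rw [Nat.card_Icc] at h2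
    omega
  obtain ⟨x, hx⟩ := h1
  rw [mem_sdiff, mem_Icc] at hx
  exact ⟨x, hx.1.1, hx.1.2, hx.2⟩

lemma shift_tint (hk1 : 1 ≤ k) (hstep : 2 * k + t < n)
    (hFpc : ∀ A ∈ F, A ∈ powersetCard (k + t) (Icc 1 n))
    (hshiftF : ∀ i j, 1 ≤ i → i < j → j ≤ n → ∀ A ∈ F, tau i j A ∈ F)
    (hint : ∀ A ∈ F, ∀ A' ∈ F, t ≤ (A ∩ A').card)
    (hA : A ∈ F) (hA' : A' ∈ F) (hnA : n ∈ A) (hnA' : n ∈ A') :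
    t ≤ ((A.erase n) ∩ (A'.erase n)).card := by
  have hpcA := mem_powersetCard.mp (hFpc A hA)
  have hpcA' := mem_powersetCard.mp (hFpc A' hA')
  have hee : (A.erase n) ∩ (A'.erase n) = (A ∩ A').erase n := by
    ext y; simp only [mem_inter, mem_erase]; tauto
  have hcardee : ((A ∩ A').erase n).card + 1 = (A ∩ A').card :=
    card_erase_add_one (mem_inter.mpr ⟨hnA, hnA'⟩)
  rw [hee]
  by_contra hcon
  push_neg at hcon
  have hr : (A ∩ A').card ≤ t := by omega
  have hrt : (A ∩ A').card = t := le_antisymm hr (hint A hA A' hA')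
  have hne : A ≠ A' := by
    intro he
    subst he
    rw [inter_self] at hrt
    omega
  have huc : (A ∪ A').card + (A ∩ A').card = (2 * k + t) + t := by
    rw [card_union_add_card_inter, hpcA.2, hpcA'.2]
    ring
  obtain ⟨x, hx1, hx2, hx3⟩ := free_elem (n := n) ((A ∪ A').erase n)
    (by
      have he : ((A ∪ A').erase n).card + 1 = (A ∪ A').card :=
        card_erase_add_one (mem_union_left _ hnA)
      omega)
  have hxA : x ∉ A := fun h => hx3 (mem_erase.mpr ⟨by omega, mem_union_left _ h⟩)
  have hxA' : x ∉ A' := fun h => hx3 (mem_erase.mpr ⟨by omega, mem_union_right _ h⟩)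
  have htau := hshiftF x n hx1 (by omega) le_rfl A' hA'
  rw [tau_of_trigger hnA' hxA'] at htau
  have hcap := hint A hA _ htau
  rw [erase_inter_insert hxA hnA (by omega)] at hcap
  have hpos : 0 < (A ∩ A').card := card_pos.mpr ⟨n, mem_inter.mpr ⟨hnA, hnA'⟩⟩
  omega

lemma shift_cross (hstep : 2 * k + t < n)
    (hFpc : ∀ A ∈ F, A ∈ powersetCard (k + t) (Icc 1 n))
    (hGpc : ∀ B ∈ G, B ∈ powersetCard k (Icc 1 n))
    (hshiftG : ∀ i j, 1 ≤ i → i < j → j ≤ n → ∀ B ∈ G, tau i j B ∈ G)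
    (hcross : ∀ A ∈ F, ∀ B ∈ G, (A ∩ B).Nonempty)
    (hA : A ∈ F) (hB : B ∈ G) (hnA : n ∈ A) (hnB : n ∈ B) :
    ((A.erase n) ∩ (B.erase n)).Nonempty := by
  by_contra hcon
  rw [not_nonempty_iff_eq_empty] at hcon
  have hsub : A ∩ B ⊆ {n} := by
    intro y hy
    rw [mem_inter] at hy
    rw [mem_singleton]
    by_contra hyn
    have : y ∈ (A.erase n) ∩ (B.erase n) :=
      mem_inter.mpr ⟨mem_erase.mpr ⟨hyn, hy.1⟩, mem_erase.mpr ⟨hyn, hy.2⟩⟩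
    rw [hcon] at this
    exact notMem_empty y this
  have hpcA := mem_powersetCard.mp (hFpc A hA)
  have hpcB := mem_powersetCard.mp (hGpc B hB)
  have huc : (A ∪ B).card + (A ∩ B).card = (k + t) + k := by
    rw [card_union_add_card_inter, hpcA.2, hpcB.2]
  have hicard : (A ∩ B).card ≤ 1 := le_trans (card_le_card hsub) (by simp)
  obtain ⟨x, hx1, hx2, hx3⟩ := free_elem (n := n) ((A ∪ B).erase n)
    (by
      have he : ((A ∪ B).erase n).card + 1 = (A ∪ B).card :=
        card_erase_add_one (mem_union_left _ hnA)
      omega)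
  have hxA : x ∉ A := fun h => hx3 (mem_erase.mpr ⟨by omega, mem_union_left _ h⟩)
  have hxB : x ∉ B := fun h => hx3 (mem_erase.mpr ⟨by omega, mem_union_right _ h⟩)
  have htau := hshiftG x n hx1 (by omega) le_rfl B hB
  rw [tau_of_trigger hnB hxB] at htau
  obtain ⟨y, hy⟩ := hcross A hA _ htau
  rw [mem_inter, mem_insert, mem_erase] at hy
  rcases hy.2 with rfl | ⟨hyn, hyB⟩
  · exact hxA hy.1
  · exact hyn (mem_singleton.mp (hsub (mem_inter.mpr ⟨hy.1, hyB⟩)))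


lemma subset_Icc_pred (hA : A ⊆ Icc 1 n) (hnA : n ∉ A) : A ⊆ Icc 1 (n-1) := by
  intro x hx
  have h1 := hA hx
  rw [mem_Icc] at h1 ⊢
  have hxn : x ≠ n := fun he => hnA (he ▸ hx)
  omega

lemma inter_Icc_erase (hmn : m < n) : A.erase n ∩ Icc 1 m = A ∩ Icc 1 m := by
  ext x
  simp only [mem_inter, mem_erase, mem_Icc]
  constructor
  · rintro ⟨⟨_, h⟩, h2⟩; exact ⟨h, h2⟩
  · rintro ⟨h1, h2⟩; exact ⟨⟨by omega, h1⟩, h2⟩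

lemma erase_injOn_filter :
    Set.InjOn (fun A => A.erase n) ((F.filter (fun A => n ∈ A)) : Set (Finset ℕ)) := by
  intro A hA A' hA' he
  simp only [coe_filter, Set.mem_setOf_eq] at hA hA'
  have h2 := congrArg (insert n) he
  simpa [insert_erase hA.2, insert_erase hA'.2] using h2

lemma main (f1 : ℕ) : ∀ t s k n m : ℕ, n + m ≤ f1 →
    ∀ f2 : ℕ, ∀ F G : Finset (Finset ℕ), mu F + mu G ≤ f2 →
    s + 1 ≤ k → 2 * k + t ≤ n → k + t + s < m →
    (∀ A ∈ F, A ∈ powersetCard (k + t) (Icc 1 n) ∧ t + s + 1 ≤ (A ∩ Icc 1 m).card) →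
    (∀ B ∈ G, B ∈ powersetCard k (Icc 1 n) ∧ s + 1 ≤ (B ∩ Icc 1 m).card) →
    (∀ A ∈ F, ∀ B ∈ G, (A ∩ B).Nonempty) →
    (∀ A ∈ F, ∀ A' ∈ F, t ≤ (A ∩ A').card) →
    F.card + G.card ≤ (Uni n m k s).card := by
  induction f1 with
  | zero =>
    intro t s k n m h1 f2 F G h2 hk hn hm hF hG hcross hint
    omega
  | succ f ihf =>
    intro t s k n m h1 f2
    induction f2 with
    | zero =>
      intro F G h2 hk hn hm hF hG hcross hint
      have c1 := card_le_mu (F := F)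
      have c2 := card_le_mu (F := G)
      have c3 : (0:ℕ) ≤ (Uni n m k s).card := Nat.zero_le _
      omega
    | succ g ihg =>
      intro F G h2 hk hn hm hF hG hcross hint
      have hGU : G ⊆ Uni n m k s := by
        intro B hB
        simp only [Uni, mem_filter]
        exact hG B hB
      by_cases hFe : F = ∅
      · rw [hFe, card_empty, zero_add]
        exact card_le_card hGU
      rcases le_or_gt m n with hmn | hmn
      swap
      · -- m > n : replace m by n
        have hiccsub : Icc 1 n ⊆ Icc 1 m := Icc_subset_Icc_right (by omega)
        have hF' : ∀ A ∈ F, A ∈ powersetCard (k + t) (Icc 1 n) ∧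
            t + s + 1 ≤ (A ∩ Icc 1 n).card := by
          intro A hA
          obtain ⟨h1', h2'⟩ := hF A hA
          have hsub := (mem_powersetCard.mp h1').1
          rw [inter_eq_left.mpr (hsub.trans hiccsub)] at h2'
          rw [inter_eq_left.mpr hsub]
          exact ⟨h1', h2'⟩
        have hG' : ∀ B ∈ G, B ∈ powersetCard k (Icc 1 n) ∧
            s + 1 ≤ (B ∩ Icc 1 n).card := by
          intro B hB
          obtain ⟨h1', h2'⟩ := hG B hB
          have hsub := (mem_powersetCard.mp h1').1
          rw [inter_eq_left.mpr (hsub.trans hiccsub)] at h2'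
          rw [inter_eq_left.mpr hsub]
          exact ⟨h1', h2'⟩
        have key := ihf t s k n n (by omega) (mu F + mu G) F G le_rfl hk hn (by omega)
          hF' hG' hcross hint
        have hueq : Uni n n k s = Uni n m k s := by
          unfold Uni
          apply filter_congr
          intro B hB
          have hsub := (mem_powersetCard.mp hB).1
          rw [inter_eq_left.mpr hsub, inter_eq_left.mpr (hsub.trans hiccsub)]
        rw [hueq] at key
        exact key
      -- now m ≤ n
      by_cases hsh : ∃ p : ℕ × ℕ, 1 ≤ p.1 ∧ p.1 < p.2 ∧ p.2 ≤ n ∧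
          ¬(comp p.1 p.2 F = F ∧ comp p.1 p.2 G = G)
      · obtain ⟨⟨i, j⟩, hi1, hij, hjn, hne⟩ := hsh
        have hin : i ≤ n := le_trans (le_of_lt hij) hjn
        have hmu : mu (comp i j F) + mu (comp i j G) < mu F + mu G := by
          rcases not_and_or.mp hne with h | h
          · exact add_lt_add_of_lt_of_le (mu_comp_lt hij h) (mu_comp_le hij)
          · exact add_lt_add_of_le_of_lt (mu_comp_le hij) (mu_comp_lt hij h)
        have hF' : ∀ A ∈ comp i j F, A ∈ powersetCard (k + t) (Icc 1 n) ∧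
            t + s + 1 ≤ (A ∩ Icc 1 m).card := by
          intro Ax hAx
          rcases mem_comp.mp hAx with ⟨h1', _⟩ | ⟨A, hA, _, rfl⟩
          · exact hF _ h1'
          · obtain ⟨hpc, hc⟩ := hF A hA
            rw [mem_powersetCard] at hpc
            exact ⟨mem_powersetCard.mpr ⟨tau_subset hpc.1 hi1 hin, by rw [tau_card, hpc.2]⟩,
              le_trans hc (tau_inter_Icc_card hi1 hij)⟩
        have hG' : ∀ B ∈ comp i j G, B ∈ powersetCard k (Icc 1 n) ∧
            s + 1 ≤ (B ∩ Icc 1 m).card := by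
          intro Bx hBx
          rcases mem_comp.mp hBx with ⟨h1', _⟩ | ⟨B, hB, _, rfl⟩
          · exact hG _ h1'
          · obtain ⟨hpc, hc⟩ := hG B hB
            rw [mem_powersetCard] at hpc
            exact ⟨mem_powersetCard.mpr ⟨tau_subset hpc.1 hi1 hin, by rw [tau_card, hpc.2]⟩,
              le_trans hc (tau_inter_Icc_card hi1 hij)⟩
        have key := ihg (comp i j F) (comp i j G) (by omega) hk hn hm hF' hG'
          (cross_comp hcross) (tint_comp hint)
        rwa [card_comp, card_comp] at key
      · -- fully shifted
        have hshift : ∀ i j, 1 ≤ i → i < j → j ≤ n →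
            comp i j F = F ∧ comp i j G = G := by
          intro i j hi1 hij hjn
          by_contra hc
          exact hsh ⟨⟨i, j⟩, hi1, hij, hjn, hc⟩
        have shiftF : ∀ i j, 1 ≤ i → i < j → j ≤ n → ∀ A ∈ F, tau i j A ∈ F :=
          fun i j a b c A hA => comp_eq_self_imp (hshift i j a b c).1 hA
        have shiftG : ∀ i j, 1 ≤ i → i < j → j ≤ n → ∀ B ∈ G, tau i j B ∈ G :=
          fun i j a b c B hB => comp_eq_self_imp (hshift i j a b c).2 hB
        have hFpc : ∀ A ∈ F, A ∈ powersetCard (k + t) (Icc 1 n) := fun A hA => (hF A hA).1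
        have hGpc : ∀ B ∈ G, B ∈ powersetCard k (Icc 1 n) := fun B hB => (hG B hB).1
        rcases eq_or_lt_of_le hn with hbase | hstep
        · -- base case n = 2k+t : complement injection
          have hinj : F.card ≤ ((Uni n m k s) \ G).card := by
            apply card_le_card_of_injOn (fun A => Icc 1 n \ A)
            · intro A hA
              obtain ⟨hpc, hcard⟩ := hF A hA
              rw [mem_powersetCard] at hpc
              rw [mem_coe, mem_sdiff]
              constructor
              · simp only [Uni, mem_filter, mem_powersetCard]
                refine ⟨⟨sdiff_subset, ?_⟩, ?_⟩
                · rw [card_sdiff_of_subset hpc.1, Nat.card_Icc, hpc.2]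
                  omega
                · have hset : (Icc 1 n \ A) ∩ Icc 1 m = Icc 1 m \ (A ∩ Icc 1 m) := by
                    ext x
                    simp only [mem_inter, mem_sdiff, mem_Icc]
                    constructor
                    · rintro ⟨⟨h1', h2'⟩, h3'⟩
                      exact ⟨h3', fun hc => h2' hc.1⟩
                    · rintro ⟨h1', h2'⟩
                      exact ⟨⟨⟨h1'.1, le_trans h1'.2 hmn⟩, fun hc => h2' ⟨hc, h1'⟩⟩, h1'⟩
                  rw [hset, card_sdiff_of_subset inter_subset_right, Nat.card_Icc]
                  have hle : (A ∩ Icc 1 m).card ≤ k + t := by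
                    rw [← hpc.2]
                    exact card_le_card inter_subset_left
                  omega
              · intro hGmem
                obtain ⟨x, hx⟩ := hcross A hA _ hGmem
                rw [mem_inter, mem_sdiff] at hx
                exact hx.2.2 hx.1
            · intro A hA A' hA' he
              have h1' := (mem_powersetCard.mp (hF A (mem_coe.mp hA)).1).1
              have h2' := (mem_powersetCard.mp (hF A' (mem_coe.mp hA')).1).1
              have h3' := congrArg (fun S => Icc 1 n \ S) he
              simpa [sdiff_sdiff_right_self, inf_eq_inter,
                inter_eq_right.mpr h1', inter_eq_right.mpr h2'] using h3'
          have := card_sdiff_add_card_eq_card hGU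
          omega
        · -- induction step: n > 2k+t
          have hsplitF := card_filter_add_card_filter_not
            (s := F) (p := fun A => n ∈ A)
          have hsplitG := card_filter_add_card_filter_not
            (s := G) (p := fun B => n ∈ B)
          -- sub-call on (F0, G0)
          have hF0 : ∀ A ∈ F.filter (fun A => ¬ n ∈ A),
              A ∈ powersetCard (k + t) (Icc 1 (n-1)) ∧ t + s + 1 ≤ (A ∩ Icc 1 m).card := by
            intro A hA
            rw [mem_filter] at hA
            obtain ⟨hpc, hc⟩ := hF A hA.1
            rw [mem_powersetCard] at hpc
            exact ⟨mem_powersetCard.mpr ⟨subset_Icc_pred hpc.1 hA.2, hpc.2⟩, hc⟩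
          have hG0 : ∀ B ∈ G.filter (fun B => ¬ n ∈ B),
              B ∈ powersetCard k (Icc 1 (n-1)) ∧ s + 1 ≤ (B ∩ Icc 1 m).card := by
            intro B hB
            rw [mem_filter] at hB
            obtain ⟨hpc, hc⟩ := hG B hB.1
            rw [mem_powersetCard] at hpc
            exact ⟨mem_powersetCard.mpr ⟨subset_Icc_pred hpc.1 hB.2, hpc.2⟩, hc⟩
          have hD1 := ihf t s k (n-1) m (by omega)
            (mu (F.filter (fun A => ¬ n ∈ A)) + mu (G.filter (fun B => ¬ n ∈ B)))
            (F.filter (fun A => ¬ n ∈ A)) (G.filter (fun B => ¬ n ∈ B)) le_rfl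
            hk (by omega) hm hF0 hG0
            (fun A hA B hB => hcross A (mem_filter.mp hA).1 B (mem_filter.mp hB).1)
            (fun A hA A' hA' => hint A (mem_filter.mp hA).1 A' (mem_filter.mp hA').1)
          by_cases hks : k = s + 1
          · rcases lt_or_eq_of_le hmn with hmlt | hmeq
            · -- (i) k = s+1, m < n : F1 = G1 = ∅
              have hF1 : F.filter (fun A => n ∈ A) = ∅ := by
                rw [filter_eq_empty_iff]
                intro A hA hnA
                obtain ⟨hpc, hc⟩ := hF A hA
                rw [mem_powersetCard] at hpc
                have hAle : (A ∩ Icc 1 m).card ≤ A.card := card_le_card inter_subset_left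
                have hsub : A ∩ Icc 1 m = A :=
                  eq_of_subset_of_card_le inter_subset_left (by omega)
                rw [← hsub] at hnA
                have := (mem_inter.mp hnA).2
                rw [mem_Icc] at this
                omega
              have hG1 : G.filter (fun B => n ∈ B) = ∅ := by
                rw [filter_eq_empty_iff]
                intro B hB hnB
                obtain ⟨hpc, hc⟩ := hG B hB
                rw [mem_powersetCard] at hpc
                have hBle : (B ∩ Icc 1 m).card ≤ B.card := card_le_card inter_subset_left
                have hsub : B ∩ Icc 1 m = B :=
                  eq_of_subset_of_card_le inter_subset_left (by omega)
                rw [← hsub] at hnB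
                have := (mem_inter.mp hnB).2
                rw [mem_Icc] at this
                omega
              have hmono := card_le_card (uni_mono (n' := n-1) (n := n) (by omega)
                (m := m) (k := k) (s := s))
              rw [hF1, card_empty] at hsplitF
              rw [hG1, card_empty] at hsplitG
              omega
            · -- m = n
              by_cases hs0 : s = 0
              · -- (iv) k = 1, s = 0, m = n
                have hG1 : G.filter (fun B => n ∈ B) = ∅ := by
                  rw [filter_eq_empty_iff]
                  intro B hB hnB
                  obtain ⟨A₀, hA₀⟩ := nonempty_iff_ne_empty.mpr hFe
                  have hpcB := mem_powersetCard.mp (hG B hB).1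
                  have hBn : B = {n} :=
                    (eq_of_subset_of_card_le (singleton_subset_iff.mpr hnB)
                      (by rw [hpcB.2, card_singleton]; omega)).symm
                  have hnA₀ : n ∈ A₀ := by
                    obtain ⟨x, hx⟩ := hcross A₀ hA₀ B hB
                    rw [hBn, mem_inter, mem_singleton] at hx
                    rw [← hx.2]
                    exact hx.1
                  have hcr := shift_cross hstep hFpc hGpc shiftG hcross hA₀ hB hnA₀ hnB
                  rw [hBn] at hcr
                  simp at hcr
                have hF1le : (F.filter (fun A => n ∈ A)).card ≤ 1 := by
                  rw [card_le_one]
                  intro A hA A' hA'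
                  rw [mem_filter] at hA hA'
                  have ht := shift_tint (by omega) hstep hFpc shiftF hint
                    hA.1 hA'.1 hA.2 hA'.2
                  have hpc := mem_powersetCard.mp (hF _ hA.1).1
                  have hpc' := mem_powersetCard.mp (hF _ hA'.1).1
                  have hcA : (A.erase n).card = t := by
                    rw [card_erase_of_mem hA.2, hpc.2]
                    omega
                  have hcA' : (A'.erase n).card = t := by
                    rw [card_erase_of_mem hA'.2, hpc'.2]
                    omega
                  have h1' : A.erase n ∩ A'.erase n = A.erase n :=
                    eq_of_subset_of_card_le inter_subset_left (by omega)
                  have hsub1 : A.erase n ⊆ A'.erase n := by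
                    rw [← h1']
                    exact inter_subset_right
                  have heq' : A.erase n = A'.erase n :=
                    eq_of_subset_of_card_le hsub1 (by omega)
                  have h2' := congrArg (insert n) heq'
                  rwa [insert_erase hA.2, insert_erase hA'.2] at h2'
                have hsplit := card_split (n := n) (m := m) (k := k) (s := s)
                  (by omega) (by omega) {∅}
                  (by
                    intro B hB
                    rw [mem_singleton] at hB
                    subst hB
                    refine ⟨empty_subset _, ?_⟩
                    rw [card_empty]
                    omega)
                  (by
                    intro B hB
                    rw [mem_singleton] at hB
                    subst hB
                    have hmem : n ∈ Icc 1 m := by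
                      rw [mem_Icc]
                      omega
                    have hin : insert n (∅ : Finset ℕ) ∩ Icc 1 m = {n} := by
                      rw [insert_empty_eq, inter_eq_left]
                      simpa using hmem
                    rw [hin, card_singleton]
                    omega)
                rw [card_singleton] at hsplit
                rw [hG1, card_empty] at hsplitG
                omega
              · -- (iii) k = s+1 ≥ 2, m = n
                have hFE : ∀ Ax ∈ (F.filter (fun A => n ∈ A)).image (fun A => A.erase n),
                    Ax ∈ powersetCard ((k-1) + t) (Icc 1 (n-1)) ∧
                      t + (s-1) + 1 ≤ (Ax ∩ Icc 1 (n-1)).card := by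
                  intro Ax hAx
                  obtain ⟨A, hA, rfl⟩ := mem_image.mp hAx
                  rw [mem_filter] at hA
                  obtain ⟨hpc, hc⟩ := hF A hA.1
                  rw [mem_powersetCard] at hpc
                  have hsub : A.erase n ⊆ Icc 1 (n-1) :=
                    subset_Icc_pred ((erase_subset _ _).trans hpc.1) (notMem_erase n A)
                  have hcd : (A.erase n).card = (k-1) + t := by
                    rw [card_erase_of_mem hA.2, hpc.2]
                    omega
                  refine ⟨mem_powersetCard.mpr ⟨hsub, hcd⟩, ?_⟩
                  rw [inter_eq_left.mpr hsub, hcd]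
                  omega
                have hGE : ∀ Bx ∈ (G.filter (fun B => n ∈ B)).image (fun B => B.erase n),
                    Bx ∈ powersetCard (k-1) (Icc 1 (n-1)) ∧
                      (s-1) + 1 ≤ (Bx ∩ Icc 1 (n-1)).card := by
                  intro Bx hBx
                  obtain ⟨B, hB, rfl⟩ := mem_image.mp hBx
                  rw [mem_filter] at hB
                  obtain ⟨hpc, hc⟩ := hG B hB.1
                  rw [mem_powersetCard] at hpc
                  have hsub : B.erase n ⊆ Icc 1 (n-1) :=
                    subset_Icc_pred ((erase_subset _ _).trans hpc.1) (notMem_erase n B)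
                  have hcd : (B.erase n).card = k - 1 := by
                    rw [card_erase_of_mem hB.2, hpc.2]
                  refine ⟨mem_powersetCard.mpr ⟨hsub, hcd⟩, ?_⟩
                  rw [inter_eq_left.mpr hsub, hcd]
                  omega
                have hcrossE : ∀ Ax ∈ (F.filter (fun A => n ∈ A)).image (fun A => A.erase n),
                    ∀ Bx ∈ (G.filter (fun B => n ∈ B)).image (fun B => B.erase n),
                    (Ax ∩ Bx).Nonempty := by
                  intro Ax hAx Bx hBx
                  obtain ⟨A, hA, rfl⟩ := mem_image.mp hAx
                  obtain ⟨B, hB, rfl⟩ := mem_image.mp hBx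
                  rw [mem_filter] at hA hB
                  exact shift_cross hstep hFpc hGpc shiftG hcross hA.1 hB.1 hA.2 hB.2
                have htintE : ∀ Ax ∈ (F.filter (fun A => n ∈ A)).image (fun A => A.erase n),
                    ∀ Ax' ∈ (F.filter (fun A => n ∈ A)).image (fun A => A.erase n),
                    t ≤ (Ax ∩ Ax').card := by
                  intro Ax hAx Ax' hAx'
                  obtain ⟨A, hA, rfl⟩ := mem_image.mp hAx
                  obtain ⟨A', hA', rfl⟩ := mem_image.mp hAx'
                  rw [mem_filter] at hA hA'
                  exact shift_tint (by omega) hstep hFpc shiftF hint hA.1 hA'.1 hA.2 hA'.2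
                have hD2 := ihf t (s-1) (k-1) (n-1) (n-1) (by omega)
                  (mu ((F.filter (fun A => n ∈ A)).image (fun A => A.erase n))
                    + mu ((G.filter (fun B => n ∈ B)).image (fun B => B.erase n)))
                  _ _ le_rfl (by omega) (by omega) (by omega) hFE hGE hcrossE htintE
                have hcF1 : ((F.filter (fun A => n ∈ A)).image (fun A => A.erase n)).card
                    = (F.filter (fun A => n ∈ A)).card := card_image_of_injOn erase_injOn_filter
                have hcG1 : ((G.filter (fun B => n ∈ B)).image (fun B => B.erase n)).card
                    = (G.filter (fun B => n ∈ B)).card := card_image_of_injOn erase_injOn_filter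
                have hsplit := card_split (n := n) (m := m) (k := k) (s := s)
                  (by omega) (by omega) (Uni (n-1) (n-1) (k-1) (s-1))
                  (by
                    intro B hB
                    simp only [Uni, mem_filter, mem_powersetCard] at hB
                    exact ⟨hB.1.1, hB.1.2⟩)
                  (by
                    intro B hB
                    simp only [Uni, mem_filter, mem_powersetCard] at hB
                    have hnB : n ∉ B := by
                      intro hc
                      have := hB.1.1 hc
                      rw [mem_Icc] at this
                      omega
                    have hsub : insert n B ⊆ Icc 1 m := by
                      apply insert_subset
                      · rw [mem_Icc]
                        omega
                      · exact hB.1.1.trans (Icc_subset_Icc_right (by omega))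
                    rw [inter_eq_left.mpr hsub, card_insert_of_notMem hnB, hB.1.2]
                    omega)
                omega
          · -- (ii) k ≥ s+2
            have hks2 : s + 2 ≤ k := by omega
            have hFE : ∀ Ax ∈ (F.filter (fun A => n ∈ A)).image (fun A => A.erase n),
                Ax ∈ powersetCard ((k-1) + t) (Icc 1 (n-1)) ∧
                  t + s + 1 ≤ (Ax ∩ Icc 1 m).card := by
              intro Ax hAx
              obtain ⟨A, hA, rfl⟩ := mem_image.mp hAx
              rw [mem_filter] at hA
              obtain ⟨hpc, hc⟩ := hF A hA.1
              rw [mem_powersetCard] at hpc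
              have hsub : A.erase n ⊆ Icc 1 (n-1) :=
                subset_Icc_pred ((erase_subset _ _).trans hpc.1) (notMem_erase n A)
              have hcd : (A.erase n).card = (k-1) + t := by
                rw [card_erase_of_mem hA.2, hpc.2]
                omega
              refine ⟨mem_powersetCard.mpr ⟨hsub, hcd⟩, ?_⟩
              rcases lt_or_eq_of_le hmn with hlt | heq
              · rwa [inter_Icc_erase hlt]
              · have hsub2 : A.erase n ⊆ Icc 1 m :=
                  hsub.trans (Icc_subset_Icc_right (by omega))
                rw [inter_eq_left.mpr hsub2, hcd]
                omega
            have hGE : ∀ Bx ∈ (G.filter (fun B => n ∈ B)).image (fun B => B.erase n),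
                Bx ∈ powersetCard (k-1) (Icc 1 (n-1)) ∧
                  s + 1 ≤ (Bx ∩ Icc 1 m).card := by
              intro Bx hBx
              obtain ⟨B, hB, rfl⟩ := mem_image.mp hBx
              rw [mem_filter] at hB
              obtain ⟨hpc, hc⟩ := hG B hB.1
              rw [mem_powersetCard] at hpc
              have hsub : B.erase n ⊆ Icc 1 (n-1) :=
                subset_Icc_pred ((erase_subset _ _).trans hpc.1) (notMem_erase n B)
              have hcd : (B.erase n).card = k - 1 := by
                rw [card_erase_of_mem hB.2, hpc.2]
              refine ⟨mem_powersetCard.mpr ⟨hsub, hcd⟩, ?_⟩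
              rcases lt_or_eq_of_le hmn with hlt | heq
              · rwa [inter_Icc_erase hlt]
              · have hsub2 : B.erase n ⊆ Icc 1 m :=
                  hsub.trans (Icc_subset_Icc_right (by omega))
                rw [inter_eq_left.mpr hsub2, hcd]
                omega
            have hcrossE : ∀ Ax ∈ (F.filter (fun A => n ∈ A)).image (fun A => A.erase n),
                ∀ Bx ∈ (G.filter (fun B => n ∈ B)).image (fun B => B.erase n),
                (Ax ∩ Bx).Nonempty := by
              intro Ax hAx Bx hBx
              obtain ⟨A, hA, rfl⟩ := mem_image.mp hAx
              obtain ⟨B, hB, rfl⟩ := mem_image.mp hBx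
              rw [mem_filter] at hA hB
              exact shift_cross hstep hFpc hGpc shiftG hcross hA.1 hB.1 hA.2 hB.2
            have htintE : ∀ Ax ∈ (F.filter (fun A => n ∈ A)).image (fun A => A.erase n),
                ∀ Ax' ∈ (F.filter (fun A => n ∈ A)).image (fun A => A.erase n),
                t ≤ (Ax ∩ Ax').card := by
              intro Ax hAx Ax' hAx'
              obtain ⟨A, hA, rfl⟩ := mem_image.mp hAx
              obtain ⟨A', hA', rfl⟩ := mem_image.mp hAx'
              rw [mem_filter] at hA hA'
              exact shift_tint (by omega) hstep hFpc shiftF hint hA.1 hA'.1 hA.2 hA'.2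
            have hD2 := ihf t s (k-1) (n-1) m (by omega)
              (mu ((F.filter (fun A => n ∈ A)).image (fun A => A.erase n))
                + mu ((G.filter (fun B => n ∈ B)).image (fun B => B.erase n)))
              _ _ le_rfl (by omega) (by omega) (by omega) hFE hGE hcrossE htintE
            have hcF1 : ((F.filter (fun A => n ∈ A)).image (fun A => A.erase n)).card
                = (F.filter (fun A => n ∈ A)).card := card_image_of_injOn erase_injOn_filter
            have hcG1 : ((G.filter (fun B => n ∈ B)).image (fun B => B.erase n)).card
                = (G.filter (fun B => n ∈ B)).card := card_image_of_injOn erase_injOn_filter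
            have hsplit := card_split (n := n) (m := m) (k := k) (s := s)
              (by omega) (by omega) (Uni (n-1) m (k-1) s)
              (by
                intro B hB
                simp only [Uni, mem_filter, mem_powersetCard] at hB
                exact ⟨hB.1.1, hB.1.2⟩)
              (by
                intro B hB
                simp only [Uni, mem_filter, mem_powersetCard] at hB
                refine le_trans hB.2 (card_le_card ?_)
                exact inter_subset_inter (subset_insert n B) Subset.rfl)
            omega

end RUB

theorem restricted_universe_bound
    (t s k n m : ℕ) (hk : s + 1 ≤ k) (hn : 2 * k + t ≤ n) (hm : k + t + s < m)
    (F G : Finset (Finset ℕ))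
    (hF : ∀ A ∈ F, A ∈ powersetCard (k + t) (Icc 1 n) ∧ t + s + 1 ≤ (A ∩ Icc 1 m).card)
    (hG : ∀ B ∈ G, B ∈ powersetCard k (Icc 1 n) ∧ s + 1 ≤ (B ∩ Icc 1 m).card)
    (hcross : ∀ A ∈ F, ∀ B ∈ G, (A ∩ B).Nonempty)
    (hint : ∀ A ∈ F, ∀ A' ∈ F, t ≤ (A ∩ A').card) :
    F.card + G.card ≤
      Nat.choose n k
        - ∑ i ∈ Finset.range (s + 1),
            Nat.choose m i * Nat.choose (n - m) (k - i) := by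
  have h := RUB.main (n + m) t s k n m le_rfl (RUB.mu F + RUB.mu G) F G le_rfl
    hk hn hm hF hG hcross hint
  rwa [RUB.uni_card hk] at h
end
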